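/- arXiv:2601.18964 — 12 statements merged into one kernel-verified Lean document; each statement's English description precedes it below -/
import Mathlib

section
/- Let A be an n×n real symmetric matrix, let θ ∈ ℝ, and let E be the orthogonal spectral projection of A for θ (i.e., E is real symmetric, E·E = E, and for every vector v one has A·v = θ·v ↔ E·v = v). If for some index u the diagonal entry satisfies E_{u,u} > 1/2, then for every real t, |exp(itA)_{u,u}| ≥ 2·E_{u,u} − 1; in particular u is sedentary. -/
open Matrix
open scoped Kronecker

/-- Transition matrix `U(t) = exp(itA)` of the continuous-time quantum walk on the
weighted graph with real symmetric adjacency matrix `A`. -/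
noncomputable def transition {m : Type*} [Fintype m] [DecidableEq m]
    (A : Matrix m m ℝ) (t : ℝ) : Matrix m m ℂ :=
  NormedSpace.exp ((Complex.I * t) • A.map (fun x : ℝ => (x : ℂ)))

/-- A vertex `u` is sedentary if `inf_{t>0} |U(t)_{u,u}| > 0`. -/
noncomputable def Sedentary {m : Type*} [Fintype m] [DecidableEq m]
    (A : Matrix m m ℝ) (u : m) : Prop :=
  0 < ⨅ t : {t : ℝ // 0 < t}, ‖transition A t u u‖

/-- `E` is the orthogonal spectral projection of `A` for the eigenvalue `θ`:
`E` is real symmetric, idempotent, and for every vector `v`, `A·v = θ·v ↔ E·v = v`. -/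
def IsSpectralProj {m : Type*} [Fintype m] [DecidableEq m]
    (A : Matrix m m ℝ) (θ : ℝ) (E : Matrix m m ℝ) : Prop :=
  E.IsSymm ∧ E * E = E ∧ ∀ v : m → ℝ, A.mulVec v = θ • v ↔ E.mulVec v = v

lemma exp_mul_eigenC {m : Type*} [Fintype m] [DecidableEq m]
    (M F : Matrix m m ℂ) (c : ℂ) (hMF : M * F = c • F) :
    NormedSpace.exp M * F = Complex.exp c • F := by
  letI : SeminormedRing (Matrix m m ℂ) := Matrix.linftyOpSemiNormedRing
  letI : NormedRing (Matrix m m ℂ) := Matrix.linftyOpNormedRing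
  letI : NormedAlgebra ℂ (Matrix m m ℂ) := Matrix.linftyOpNormedAlgebra
  have hpow : ∀ k : ℕ, M ^ k * F = c ^ k • F := by
    intro k
    induction k with
    | zero => simp
    | succ k ih =>
      rw [pow_succ, Matrix.mul_assoc, hMF, mul_smul_comm, ih, smul_smul, pow_succ, mul_comm]
  have hsum : Summable fun k : ℕ => ((k.factorial : ℂ))⁻¹ • M ^ k :=
    NormedSpace.expSeries_summable' (𝕂 := ℂ) M
  have hsum2 : Summable fun k : ℕ => ((k.factorial : ℂ))⁻¹ * c ^ k := by
    simpa [smul_eq_mul] using NormedSpace.expSeries_summable' (𝕂 := ℂ) c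
  rw [NormedSpace.exp_eq_tsum ℂ]
  rw [← hsum.tsum_mul_right]
  have hterm : ∀ k : ℕ, (((k.factorial : ℂ))⁻¹ • M ^ k) * F
      = (((k.factorial : ℂ))⁻¹ * c ^ k) • F := by
    intro k; rw [smul_mul_assoc, hpow, smul_smul]
  rw [tsum_congr hterm, hsum2.tsum_smul_const]
  congr 1
  rw [Complex.exp_eq_exp_ℂ, NormedSpace.exp_eq_tsum ℂ]
  simp [smul_eq_mul]

lemma eigen_mul_expC {m : Type*} [Fintype m] [DecidableEq m]
    (M F : Matrix m m ℂ) (c : ℂ) (hFM : F * M = c • F) :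
    F * NormedSpace.exp M = Complex.exp c • F := by
  letI : SeminormedRing (Matrix m m ℂ) := Matrix.linftyOpSemiNormedRing
  letI : NormedRing (Matrix m m ℂ) := Matrix.linftyOpNormedRing
  letI : NormedAlgebra ℂ (Matrix m m ℂ) := Matrix.linftyOpNormedAlgebra
  have hpow : ∀ k : ℕ, F * M ^ k = c ^ k • F := by
    intro k
    induction k with
    | zero => simp
    | succ k ih =>
      rw [pow_succ, ← Matrix.mul_assoc, ih, smul_mul_assoc, hFM, smul_smul, pow_succ]
  have hsum : Summable fun k : ℕ => ((k.factorial : ℂ))⁻¹ • M ^ k :=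
    NormedSpace.expSeries_summable' (𝕂 := ℂ) M
  have hsum2 : Summable fun k : ℕ => ((k.factorial : ℂ))⁻¹ * c ^ k := by
    simpa [smul_eq_mul] using NormedSpace.expSeries_summable' (𝕂 := ℂ) c
  rw [NormedSpace.exp_eq_tsum ℂ]
  rw [← hsum.tsum_mul_left]
  have hterm : ∀ k : ℕ, F * (((k.factorial : ℂ))⁻¹ • M ^ k)
      = (((k.factorial : ℂ))⁻¹ * c ^ k) • F := by
    intro k; rw [mul_smul_comm, hpow, smul_smul]
  rw [tsum_congr hterm, hsum2.tsum_smul_const]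
  congr 1
  rw [Complex.exp_eq_exp_ℂ, NormedSpace.exp_eq_tsum ℂ]
  simp [smul_eq_mul]


/-- if `E_{u,u} > 1/2` for the spectral projection `E` of a real symmetric
matrix `A` at `θ`, then `|exp(itA)_{u,u}| ≥ 2E_{u,u} - 1` for all real `t`;
in particular `u` is sedentary. -/
theorem stmt0 {n : ℕ} (A : Matrix (Fin n) (Fin n) ℝ) (hA : A.IsSymm)
    (θ : ℝ) (E : Matrix (Fin n) (Fin n) ℝ) (hE : IsSpectralProj A θ E)
    (u : Fin n) (h : 1 / 2 < E u u) :
    (∀ t : ℝ, 2 * E u u - 1 ≤ ‖transition A t u u‖) ∧ Sedentary A u := by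
  obtain ⟨hEsymm, hEE, hEig⟩ := hE
  -- A * E = θ • E
  have hAE : A * E = θ • E := by
    ext i j
    have hcol : E.mulVec (fun k => E k j) = fun k => E k j := by
      funext i'
      have := congrFun (congrFun hEE i') j
      rw [Matrix.mul_apply] at this
      simpa [Matrix.mulVec, dotProduct] using this
    have h2 := congrFun ((hEig fun k => E k j).mpr hcol) i
    simpa [Matrix.mulVec, dotProduct, Matrix.mul_apply] using h2
  have hEA : E * A = θ • E := by
    have h1 := congrArg Matrix.transpose hAE
    rwa [Matrix.transpose_mul, hEsymm.eq, hA.eq, Matrix.transpose_smul, hEsymm.eq] at h1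
  set B := A.map (fun x : ℝ => (x : ℂ)) with hBdef
  set F := E.map (fun x : ℝ => (x : ℂ)) with hFdef
  have castmul : ∀ (M N : Matrix (Fin n) (Fin n) ℝ),
      (M.map (fun x : ℝ => (x : ℂ))) * (N.map (fun x : ℝ => (x : ℂ)))
        = (M * N).map (fun x : ℝ => (x : ℂ)) := by
    intro M N; ext i j
    simp [Matrix.mul_apply, Matrix.map_apply]
  have castsmul : ∀ (r : ℝ) (M : Matrix (Fin n) (Fin n) ℝ),
      (r • M).map (fun x : ℝ => (x : ℂ)) = (r : ℂ) • M.map (fun x : ℝ => (x : ℂ)) := by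
    intro r M; ext i j
    simp [Matrix.map_apply]
  have hBF : B * F = (θ : ℂ) • F := by
    rw [hBdef, hFdef, castmul, hAE, castsmul]
  have hFB : F * B = (θ : ℂ) • F := by
    rw [hBdef, hFdef, castmul, hEA, castsmul]
  have hFF : F * F = F := by rw [hFdef, castmul, hEE]
  have hFH : Fᴴ = F := by
    ext i j
    simp only [hFdef, Matrix.conjTranspose_apply, Matrix.map_apply, Complex.star_def,
      Complex.conj_ofReal, Complex.ofReal_inj]
    exact hEsymm.apply i j
  have hBH : Bᴴ = B := by
    ext i j
    simp only [hBdef, Matrix.conjTranspose_apply, Matrix.map_apply, Complex.star_def,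
      Complex.conj_ofReal, Complex.ofReal_inj]
    exact hA.apply i j
  -- P = 1 - F
  set P : Matrix (Fin n) (Fin n) ℂ := 1 - F with hPdef
  have hPP : P * P = P := by
    rw [hPdef, Matrix.sub_mul, Matrix.mul_sub, Matrix.mul_sub, hFF]
    simp
  have hPH : Pᴴ = P := by rw [hPdef, Matrix.conjTranspose_sub, hFH, Matrix.conjTranspose_one]
  have hPuu : P u u = ((1 - E u u : ℝ) : ℂ) := by
    simp [hPdef, hFdef, Matrix.sub_apply, Matrix.one_apply, Matrix.map_apply]
  have hPreal : ∀ i j, star (P i j) = P i j := by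
    intro i j
    simp [hPdef, hFdef, Matrix.sub_apply, Matrix.one_apply, Matrix.map_apply, apply_ite star,
      Complex.star_def, Complex.conj_ofReal]
  have hPsymm : ∀ i j, P i j = P j i := by
    intro i j
    have := congrFun (congrFun hPH i) j
    rw [Matrix.conjTranspose_apply, hPreal] at this
    exact this.symm
  have hEuu_le : E u u ≤ 1 := by
    have hsum : E u u = ∑ k, (E k u)^2 := by
      have h1 := congrFun (congrFun hEE u) u
      rw [Matrix.mul_apply] at h1
      rw [← h1]
      refine Finset.sum_congr rfl fun k _ => ?_
      rw [hEsymm.apply k u, sq]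
    have hle : (E u u)^2 ≤ ∑ k, (E k u)^2 :=
      Finset.single_le_sum (f := fun k => (E k u)^2)
        (fun k _ => sq_nonneg (E k u)) (Finset.mem_univ u)
    nlinarith
  have hmain : ∀ t : ℝ, 2 * E u u - 1 ≤ ‖transition A t u u‖ := by
    intro t
    set M : Matrix (Fin n) (Fin n) ℂ := (Complex.I * t) • B with hMdef
    set c : ℂ := Complex.I * t * θ with hcdef
    set U := NormedSpace.exp M with hUdef
    have hMF : M * F = c • F := by
      rw [hMdef, smul_mul_assoc, hBF, smul_smul, hcdef]
    have hFM : F * M = c • F := by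
      rw [hMdef, mul_smul_comm, hFB, smul_smul, hcdef]
    have hUF : U * F = Complex.exp c • F := exp_mul_eigenC M F c hMF
    have hFU : F * U = Complex.exp c • F := eigen_mul_expC M F c hFM
    -- unitarity
    have hMH : Mᴴ = -M := by
      rw [hMdef, Matrix.conjTranspose_smul, hBH, ← neg_smul]
      congr 1
      simp [Complex.star_def, _root_.map_mul, Complex.conj_ofReal]
    have hUnit : Uᴴ * U = 1 := by
      rw [hUdef, ← Matrix.exp_conjTranspose, hMH,
        ← Matrix.exp_add_of_commute (-M) M (Commute.refl M).neg_left]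
      simp [NormedSpace.exp_zero]
    -- commutation
    have hcomm : U * P = P * U := by
      rw [hPdef, Matrix.mul_sub, Matrix.sub_mul, hUF, hFU, Matrix.mul_one, Matrix.one_mul]
    have hUP : U * P = P * (U * P) := by
      calc U * P = U * (P * P) := by rw [hPP]
      _ = (U * P) * P := by rw [Matrix.mul_assoc]
      _ = (P * U) * P := by rw [hcomm]
      _ = P * (U * P) := by rw [Matrix.mul_assoc]
    set v : Fin n → ℂ := fun j => P j u with hvdef
    have hstarv : star v = v := by
      funext j; exact hPreal j u
    have hentry : (U * P) u u = dotProduct v (U.mulVec v) := by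
      conv_lhs => rw [hUP]
      simp only [Matrix.mul_apply, dotProduct, Matrix.mulVec, hvdef]
      exact Finset.sum_congr rfl fun j _ => by rw [hPsymm u j]
    have hUv : ∀ w : Fin n → ℂ, dotProduct (star (U.mulVec w)) (U.mulVec w)
        = dotProduct (star w) w := by
      intro w
      rw [Matrix.star_mulVec, dotProduct_mulVec, Matrix.vecMul_vecMul, hUnit,
        Matrix.vecMul_one]
    have hvv : dotProduct (star v) v = ((1 - E u u : ℝ) : ℂ) := by
      rw [hstarv]
      have hd : dotProduct v v = (P * P) u u := by
        rw [Matrix.mul_apply, dotProduct]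
        exact Finset.sum_congr rfl fun j _ => by rw [hPsymm u j]
      rw [hd, hPP, hPuu]
    set x : EuclideanSpace ℂ (Fin n) := WithLp.toLp 2 v with hxdef
    set y : EuclideanSpace ℂ (Fin n) := WithLp.toLp 2 (U.mulVec v) with hydef
    have hinner_xy : (inner ℂ x y : ℂ) = dotProduct v (U.mulVec v) := by
      rw [hxdef, hydef, EuclideanSpace.inner_toLp_toLp, hstarv, dotProduct_comm]
    have hinner_xx : (inner ℂ x x : ℂ) = ((1 - E u u : ℝ) : ℂ) := by
      rw [hxdef, EuclideanSpace.inner_toLp_toLp, dotProduct_comm, hvv]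
    have hinner_yy : (inner ℂ y y : ℂ) = ((1 - E u u : ℝ) : ℂ) := by
      rw [hydef, EuclideanSpace.inner_toLp_toLp, dotProduct_comm, hUv v, hvv]
    have hx2 : ‖x‖^2 = 1 - E u u := by
      have h1 := inner_self_eq_norm_sq_to_K (𝕜 := ℂ) x
      rw [hinner_xx] at h1
      have h2 : ((1 - E u u : ℝ) : ℂ) = ((‖x‖^2 : ℝ) : ℂ) := by push_cast at h1 ⊢; exact h1
      exact (Complex.ofReal_injective h2).symm
    have hy2 : ‖y‖^2 = 1 - E u u := by
      have h1 := inner_self_eq_norm_sq_to_K (𝕜 := ℂ) y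
      rw [hinner_yy] at h1
      have h2 : ((1 - E u u : ℝ) : ℂ) = ((‖y‖^2 : ℝ) : ℂ) := by push_cast at h1 ⊢; exact h1
      exact (Complex.ofReal_injective h2).symm
    have hCS : ‖(dotProduct v (U.mulVec v))‖ ≤ 1 - E u u := by
      have h1 : ‖(inner ℂ x y : ℂ)‖ ≤ ‖x‖ * ‖y‖ := norm_inner_le_norm x y
      rw [hinner_xy] at h1
      nlinarith [sq_nonneg (‖x‖ - ‖y‖), norm_nonneg x, norm_nonneg y,
        norm_nonneg (dotProduct v (U.mulVec v))]
    have hTU : transition A t = U := rfl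
    have hsplit : transition A t u u = Complex.exp c * (E u u : ℂ) + (U * P) u u := by
      have hsum1 : U * F + U * P = U := by
        rw [← Matrix.mul_add, hPdef]
        simp
      calc transition A t u u = (U * F + U * P) u u := by rw [hsum1, hTU]
      _ = (U * F) u u + (U * P) u u := rfl
      _ = Complex.exp c * (E u u : ℂ) + (U * P) u u := by
          rw [hUF]
          simp [Matrix.smul_apply, hFdef, Matrix.map_apply, smul_eq_mul]
    have habs_exp : ‖Complex.exp c‖ = 1 := by
      rw [hcdef, Complex.norm_exp]
      norm_num [Complex.mul_re, Complex.mul_im]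
    have hlow : ‖Complex.exp c * (E u u : ℂ)‖ = E u u := by
      rw [norm_mul, habs_exp, one_mul, Complex.norm_real, Real.norm_eq_abs,
        abs_of_pos (by linarith : (0:ℝ) < E u u)]
    have h1 : ‖(U * P) u u‖ ≤ 1 - E u u := by
      rw [hentry]; exact hCS
    have h2 : ‖Complex.exp c * (E u u : ℂ)‖ - ‖(U * P) u u‖
        ≤ ‖transition A t u u‖ := by
      rw [hsplit]
      have h3 := norm_sub_norm_le (Complex.exp c * (E u u : ℂ)) (-((U * P) u u))
      simpa [sub_neg_eq_add] using h3
    rw [hlow] at h2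
    linarith
  refine ⟨hmain, ?_⟩
  unfold Sedentary
  haveI : Nonempty {t : ℝ // 0 < t} := ⟨⟨1, one_pos⟩⟩
  exact lt_of_lt_of_le (by linarith : (0:ℝ) < 2 * E u u - 1)
    (le_ciInf fun t => hmain t)
end

section
/- Let A be an n×n real symmetric matrix, θ ∈ ℝ an eigenvalue of A whose eigenspace has dimension m, and let E be the orthogonal spectral projection of A for θ. If either 2m > n, or 2m = n and E_{u,u} < 1/2 for some index u, then there exists an index v with E_{v,v} > 1/2, and hence |exp(itA)_{v,v}| ≥ 2·E_{v,v} − 1 > 0 for all real t; in particular the graph has a sedentary vertex. -/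
open Matrix
open scoped Kronecker

section Aux

variable {k : Type*} [Fintype k] [DecidableEq k]

/-- If `N * P = 0` then `exp N * P = P`. -/
lemma exp_mul_eq_self_of_mul_eq_zero (N P : Matrix k k ℂ) (h : N * P = 0) :
    NormedSpace.exp N * P = P := by
  letI : SeminormedRing (Matrix k k ℂ) := Matrix.linftyOpSemiNormedRing
  letI : NormedRing (Matrix k k ℂ) := Matrix.linftyOpNormedRing
  letI : NormedAlgebra ℂ (Matrix k k ℂ) := Matrix.linftyOpNormedAlgebra
  rw [NormedSpace.exp_eq_tsum (𝕂 := ℂ)]; beta_reduce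
  refine Eq.trans ((NormedSpace.expSeries_summable' (𝕂 := ℂ) N).tsum_mul_right P).symm ?_
  have hterm : ∀ i : ℕ, (((i.factorial : ℂ))⁻¹ • N ^ i) * P = if i = 0 then P else 0 := by
    intro i
    cases i with
    | zero => simp
    | succ j =>
      have : N ^ (j + 1) * P = N ^ j * (N * P) := by rw [pow_succ, mul_assoc]
      simp [smul_mul_assoc, this, h]
  calc (∑' i : ℕ, (((i.factorial : ℂ))⁻¹ • N ^ i) * P)
      = ∑' i : ℕ, (if i = 0 then P else 0) := by
        exact tsum_congr hterm
    _ = P := by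
        rw [tsum_eq_single 0 (by intro b hb; simp [hb])]; simp

end Aux

/-- if `θ` is an eigenvalue of the real symmetric matrix `A` whose eigenspace
has dimension `m` and either `2m > n`, or `2m = n` and `E_{u,u} < 1/2` for some `u`, then
some vertex `v` has `E_{v,v} > 1/2`, hence `|exp(itA)_{v,v}| ≥ 2E_{v,v} - 1 > 0` for all
real `t`; in particular the graph has a sedentary vertex. -/
theorem stmt1 {n : ℕ} (A : Matrix (Fin n) (Fin n) ℝ) (hA : A.IsSymm)
    (θ : ℝ) (m : ℕ) (heig : Module.End.HasEigenvalue A.mulVecLin θ)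
    (hdim : Module.finrank ℝ (Module.End.eigenspace A.mulVecLin θ) = m)
    (E : Matrix (Fin n) (Fin n) ℝ) (hE : IsSpectralProj A θ E)
    (hcase : 2 * m > n ∨ (2 * m = n ∧ ∃ u : Fin n, E u u < 1 / 2)) :
    ∃ v : Fin n, 1 / 2 < E v v ∧ 0 < 2 * E v v - 1 ∧
      (∀ t : ℝ, 2 * E v v - 1 ≤ ‖transition A t v v‖) ∧ Sedentary A v := by
  obtain ⟨hEsymm, hEidem, hEspec⟩ := hE
  -- Step 1: the trace of E equals m.
  have hfix : ∀ x : Fin n → ℝ, x ∈ LinearMap.range E.mulVecLin ↔ E.mulVec x = x := by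
    intro x
    constructor
    · rintro ⟨w, rfl⟩
      show E.mulVec (E.mulVec w) = E.mulVec w
      rw [Matrix.mulVec_mulVec, hEidem]
    · intro hx; exact ⟨x, hx⟩
  have hrange : LinearMap.range E.mulVecLin = Module.End.eigenspace A.mulVecLin θ := by
    ext x
    rw [hfix x, Module.End.mem_eigenspace_iff]
    show E.mulVec x = x ↔ A.mulVecLin x = θ • x
    rw [Matrix.mulVecLin_apply, ← hEspec x]
  have hproj : LinearMap.IsProj (LinearMap.range E.mulVecLin) E.mulVecLin :=
    ⟨fun x => LinearMap.mem_range_self _ x, fun x hx => (hfix x).mp hx⟩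
  have htraceLM : LinearMap.trace ℝ (Fin n → ℝ) E.mulVecLin = (m : ℝ) := by
    rw [hproj.trace, hrange, hdim]
  have htrace : Matrix.trace E = (m : ℝ) := by
    rw [← htraceLM, LinearMap.trace_eq_matrix_trace ℝ (Pi.basisFun ℝ (Fin n)),
      LinearMap.toMatrix_eq_toMatrix', ← Matrix.toLin'_apply' E, LinearMap.toMatrix'_toLin']
  have htraceSum : ∑ v : Fin n, E v v = (m : ℝ) := htrace
  -- Step 2: find v with E v v > 1/2.
  have hv : ∃ v : Fin n, 1 / 2 < E v v := by
    by_contra hcon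
    push_neg at hcon
    rcases hcase with hgt | ⟨heq, u, hu⟩
    · have h1 : (m : ℝ) ≤ ∑ _v : Fin n, (1 / 2 : ℝ) := by
        rw [← htraceSum]; exact Finset.sum_le_sum fun i _ => hcon i
      simp only [Finset.sum_const, Finset.card_univ, Fintype.card_fin, nsmul_eq_mul] at h1
      have h2 : (n : ℝ) < 2 * m := by exact_mod_cast hgt
      linarith
    · have hne : (u : Fin n) ∈ Finset.univ := Finset.mem_univ u
      have h1 : ∑ v : Fin n, E v v < ∑ _v : Fin n, (1 / 2 : ℝ) :=
        Finset.sum_lt_sum (fun i _ => hcon i) ⟨u, hne, hu⟩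
      simp only [Finset.sum_const, Finset.card_univ, Fintype.card_fin, nsmul_eq_mul] at h1
      rw [htraceSum] at h1
      have h2 : (2 : ℝ) * m = n := by exact_mod_cast heq
      linarith
  obtain ⟨v, hv⟩ := hv
  -- Setup complex matrices.
  set B : Matrix (Fin n) (Fin n) ℂ := A.map (fun x : ℝ => (x : ℂ)) with hB
  set E' : Matrix (Fin n) (Fin n) ℂ := E.map (fun x : ℝ => (x : ℂ)) with hE'
  -- basic real facts
  have hAE : A * E = θ • E := by
    ext i j
    have hw : E.mulVec (fun k => E k j) = fun k => E k j := by
      funext i'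
      have : (E * E) i' j = E i' j := by rw [hEidem]
      simpa [Matrix.mul_apply, Matrix.mulVec, dotProduct] using this
    have := congrFun ((hEspec (fun k => E k j)).mpr hw) i
    simpa [Matrix.mulVec, dotProduct, Matrix.mul_apply] using this
  have hEA : E * A = θ • E := by
    have h1 : (A * E)ᵀ = Eᵀ * Aᵀ := Matrix.transpose_mul A E
    rw [hA.eq, hEsymm.eq] at h1
    rw [← h1, hAE, Matrix.transpose_smul, hEsymm.eq]
  -- complex versions via the ring hom ofReal
  have hmapmul : ∀ X Y : Matrix (Fin n) (Fin n) ℝ,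
      (X * Y).map (fun x : ℝ => (x : ℂ)) =
        X.map (fun x : ℝ => (x : ℂ)) * Y.map (fun x : ℝ => (x : ℂ)) := by
    intro X Y
    ext i j
    simp [Matrix.mul_apply, Matrix.map_apply]
  have hBE : B * E' = (θ : ℂ) • E' := by
    rw [hB, hE', ← hmapmul, hAE]
    ext i j; simp [Matrix.map_apply]
  have hEB : E' * B = (θ : ℂ) • E' := by
    rw [hB, hE', ← hmapmul, hEA]
    ext i j; simp [Matrix.map_apply]
  have hE'idem : E' * E' = E' := by
    rw [hE', ← hmapmul, hEidem]
  have hE'herm : E'ᴴ = E' := by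
    ext i j
    have := hEsymm.apply i j
    simp [Matrix.conjTranspose_apply, Matrix.map_apply, hE']
    exact_mod_cast congrArg (fun x : ℝ => (x : ℂ)) this
  have hBherm : Bᴴ = B := by
    ext i j
    have := hA.apply i j
    simp [Matrix.conjTranspose_apply, Matrix.map_apply, hB]
    exact_mod_cast congrArg (fun x : ℝ => (x : ℂ)) this
  -- main bound for each t
  have hbound : ∀ t : ℝ, 2 * E v v - 1 ≤ ‖transition A t v v‖ := by
    intro t
    set c : ℂ := Complex.I * t * θ with hc
    set M : Matrix (Fin n) (Fin n) ℂ := (Complex.I * t) • B with hM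
    set U : Matrix (Fin n) (Fin n) ℂ := NormedSpace.exp M with hU
    have hME : M * E' = c • E' := by
      rw [hM, Matrix.smul_mul, hBE, smul_smul, hc]
    have hEM : E' * M = c • E' := by
      rw [hM, Matrix.mul_smul, hEB, smul_smul, hc]
    have hMherm : Mᴴ = -M := by
      rw [hM, Matrix.conjTranspose_smul, hBherm]
      rw [← neg_smul]
      congr 1
      simp [Complex.ext_iff]
    -- unitarity
    have hUU : U * Uᴴ = 1 := by
      rw [hU, ← Matrix.exp_conjTranspose, hMherm, ← Matrix.exp_add_of_commute _ _
        (Commute.neg_right (Commute.refl M)), add_neg_cancel, NormedSpace.exp_zero]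
    have hUU' : Uᴴ * U = 1 := by
      rw [hU, ← Matrix.exp_conjTranspose, hMherm, ← Matrix.exp_add_of_commute _ _
        (Commute.neg_left (Commute.refl M)), neg_add_cancel, NormedSpace.exp_zero]
    -- U * E' = exp c • E'
    have hUE : U * E' = Complex.exp c • E' := by
      have hsplit : M = c • (1 : Matrix (Fin n) (Fin n) ℂ) + (M - c • 1) := by abel
      have hcomm : Commute (c • (1 : Matrix (Fin n) (Fin n) ℂ)) (M - c • 1) := by
        apply Commute.smul_left
        exact Commute.one_left _
      have hNE : (M - c • (1 : Matrix (Fin n) (Fin n) ℂ)) * E' = 0 := by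
        rw [Matrix.sub_mul, hME, Matrix.smul_mul, one_mul, sub_self]
      have hexp1 : NormedSpace.exp (c • (1 : Matrix (Fin n) (Fin n) ℂ))
          = Complex.exp c • (1 : Matrix (Fin n) (Fin n) ℂ) := by
        letI : SeminormedRing (Matrix (Fin n) (Fin n) ℂ) := Matrix.linftyOpSemiNormedRing
        letI : NormedRing (Matrix (Fin n) (Fin n) ℂ) := Matrix.linftyOpNormedRing
        letI : NormedAlgebra ℂ (Matrix (Fin n) (Fin n) ℂ) := Matrix.linftyOpNormedAlgebra
        have h0 := NormedSpace.algebraMap_exp_comm (𝕂 := ℂ) (𝔸 := Matrix (Fin n) (Fin n) ℂ) c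
        rw [Algebra.algebraMap_eq_smul_one, Algebra.algebraMap_eq_smul_one] at h0
        rw [Complex.exp_eq_exp_ℂ]; exact h0.symm
      calc U * E' = NormedSpace.exp (c • (1 : Matrix (Fin n) (Fin n) ℂ) + (M - c • 1)) * E' := by
            rw [hU, ← hsplit]
        _ = (NormedSpace.exp (c • (1 : Matrix (Fin n) (Fin n) ℂ))
              * NormedSpace.exp (M - c • 1)) * E' := by
            rw [Matrix.exp_add_of_commute _ _ hcomm]
        _ = Complex.exp c • (NormedSpace.exp (M - c • 1) * E') := by
            rw [hexp1, Matrix.smul_mul, one_mul, Matrix.smul_mul]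
        _ = Complex.exp c • E' := by
            rw [exp_mul_eq_self_of_mul_eq_zero _ _ hNE]
    -- F' and commutation
    set F' : Matrix (Fin n) (Fin n) ℂ := 1 - E' with hF'
    have hcommMF : Commute M F' := by
      rw [hF']
      apply Commute.sub_right (Commute.one_right M)
      show M * E' = E' * M
      rw [hME, hEM]
    have hcommUF : U * F' = F' * U := by
      letI : SeminormedRing (Matrix (Fin n) (Fin n) ℂ) := Matrix.linftyOpSemiNormedRing
      letI : NormedRing (Matrix (Fin n) (Fin n) ℂ) := Matrix.linftyOpNormedRing
      letI : NormedAlgebra ℂ (Matrix (Fin n) (Fin n) ℂ) := Matrix.linftyOpNormedAlgebra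
      exact (hcommMF.symm.exp_right).symm
    have hF'herm : F'ᴴ = F' := by
      rw [hF', Matrix.conjTranspose_sub, hE'herm, Matrix.conjTranspose_one]
    have hF'idem : F' * F' = F' := by
      rw [hF', Matrix.sub_mul, Matrix.mul_sub, Matrix.mul_sub, one_mul, mul_one, hE'idem]
      simp
    set G : Matrix (Fin n) (Fin n) ℂ := U * F' with hG
    have hGGH : G * Gᴴ = F' := by
      rw [hG, Matrix.conjTranspose_mul, hF'herm]
      calc U * F' * (F' * Uᴴ) = U * (F' * F') * Uᴴ := by
            rw [Matrix.mul_assoc, Matrix.mul_assoc, Matrix.mul_assoc]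
        _ = F' * (U * Uᴴ) := by rw [hF'idem, ← Matrix.mul_assoc, ← hG, hcommUF, Matrix.mul_assoc]
        _ = F' := by rw [hUU, mul_one]
    have hFHF : F'ᴴ * F' = F' := by rw [hF'herm, hF'idem]
    -- diagonal entries
    have hFvvre : (F' v v).re = 1 - E v v := by
      simp [hF', hE', Matrix.one_apply, Matrix.map_apply]
    have hsumG : ∑ j : Fin n, Complex.normSq (G v j) = 1 - E v v := by
      have h1 : (G * Gᴴ) v v = ((∑ j : Fin n, Complex.normSq (G v j) : ℝ) : ℂ) := by
        rw [Matrix.mul_apply]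
        push_cast
        apply Finset.sum_congr rfl
        intro j _
        rw [Matrix.conjTranspose_apply]
        rw [Complex.star_def, Complex.mul_conj]
      rw [hGGH] at h1
      have := congrArg Complex.re h1
      simpa [hFvvre] using this.symm
    have hsumF : ∑ j : Fin n, Complex.normSq (F' j v) = 1 - E v v := by
      have h1 : (F'ᴴ * F') v v = ((∑ j : Fin n, Complex.normSq (F' j v) : ℝ) : ℂ) := by
        rw [Matrix.mul_apply]
        push_cast
        apply Finset.sum_congr rfl
        intro j _
        rw [Matrix.conjTranspose_apply]
        rw [Complex.star_def, mul_comm, Complex.mul_conj]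
      rw [hFHF] at h1
      have := congrArg Complex.re h1
      simpa [hFvvre] using this.symm
    have hEvvle : 1 - E v v ≥ 0 := by
      rw [← hsumG]
      exact Finset.sum_nonneg fun j _ => Complex.normSq_nonneg _
    -- Cauchy–Schwarz bound on G v v
    have hGFv : G v v = ∑ j : Fin n, G v j * F' j v := by
      have h1 : G = G * F' := by
        rw [hG, Matrix.mul_assoc, hF'idem]
      conv_lhs => rw [h1]
      rw [Matrix.mul_apply]
    have habsG : ‖G v v‖ ≤ 1 - E v v := by
      rw [hGFv]
      calc ‖∑ j : Fin n, G v j * F' j v‖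
          ≤ ∑ j : Fin n, ‖G v j * F' j v‖ := by
            exact norm_sum_le _ _
        _ = ∑ j : Fin n, ‖G v j‖ * ‖F' j v‖ := by
            apply Finset.sum_congr rfl; intro j _; exact norm_mul _ _
        _ ≤ 1 - E v v := by
            have hcs := Finset.sum_mul_sq_le_sq_mul_sq Finset.univ
              (fun j : Fin n => ‖G v j‖) (fun j : Fin n => ‖F' j v‖)
            have hsq : ∀ z : ℂ, ‖z‖ ^ 2 = Complex.normSq z := fun z => Complex.sq_norm z
            rw [show (∑ j : Fin n, ‖G v j‖ ^ 2) = 1 - E v v by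
                  simp_rw [hsq]; exact hsumG,
                show (∑ j : Fin n, ‖F' j v‖ ^ 2) = 1 - E v v by
                  simp_rw [hsq]; exact hsumF] at hcs
            have hnonneg : (0 : ℝ) ≤ ∑ j : Fin n, ‖G v j‖ * ‖F' j v‖ :=
              Finset.sum_nonneg fun j _ =>
                mul_nonneg (norm_nonneg _) (norm_nonneg _)
            nlinarith
    -- put it together
    have hsplitU : U v v = Complex.exp c * (E v v : ℂ) + G v v := by
      have h1 : U = U * E' + G := by
        rw [hG, ← Matrix.mul_add, hF']
        simp
      have h2 : U v v = (U * E') v v + G v v := by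
        conv_lhs => rw [h1]
        simp [Matrix.add_apply]
      rw [h2, hUE]
      simp [Matrix.smul_apply, hE', Matrix.map_apply, smul_eq_mul]
    have habsexp : ‖Complex.exp c * (E v v : ℂ)‖ = E v v := by
      rw [norm_mul, Complex.norm_exp]
      have hre : c.re = 0 := by simp [hc, Complex.ext_iff]
      rw [hre, Real.exp_zero, one_mul, Complex.norm_real, Real.norm_eq_abs, abs_of_pos (by linarith)]
    have htrans : transition A t v v = U v v := rfl
    rw [htrans, hsplitU]
    calc 2 * E v v - 1 = E v v - (1 - E v v) := by ring
      _ ≤ ‖Complex.exp c * (E v v : ℂ)‖ - ‖G v v‖ := by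
          rw [habsexp]; linarith
      _ ≤ ‖Complex.exp c * (E v v : ℂ) + G v v‖ := by
          have h := norm_add_le (Complex.exp c * (E v v : ℂ) + G v v) (-(G v v))
          simp only [add_neg_cancel_right, norm_neg] at h
          linarith
  refine ⟨v, hv, by linarith, hbound, ?_⟩
  unfold Sedentary
  have hpos : (0 : ℝ) < 2 * E v v - 1 := by linarith
  exact lt_of_lt_of_le hpos (le_ciInf fun t => hbound t.1)
end

section
/- Let A be an n×n real symmetric matrix that is bipartite, witnessed by a diagonal matrix S with all diagonal entries ±1 satisfying S·A·S = −A. Let θ ∈ ℝ and let E be the orthogonal spectral projection of A for θ. Then S·E·S is the orthogonal spectral projection of A for −θ (it is real symmetric, idempotent, and for every vector v, A·v = −θ·v ↔ (S·E·S)·v = v), and (S·E·S)_{u,u} = E_{u,u} for every index u. Consequently, θ belongs to the eigenvalue support of u if and only if −θ does. -/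
open Matrix
open scoped Kronecker

/-- if `A` is bipartite, witnessed by a `±1` diagonal matrix `S` with
`S·A·S = -A`, and `E` is the spectral projection of `A` for `θ`, then `S·E·S` is the
spectral projection of `A` for `-θ`, it has the same diagonal as `E`, and `θ` is in the
eigenvalue support of `u` iff `-θ` is. -/
theorem stmt2 {n : ℕ} (A : Matrix (Fin n) (Fin n) ℝ) (hA : A.IsSymm)
    (d : Fin n → ℝ) (hd : ∀ i, d i = 1 ∨ d i = -1)
    (S : Matrix (Fin n) (Fin n) ℝ) (hS : S = Matrix.diagonal d)
    (hbip : S * A * S = -A)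
    (θ : ℝ) (E : Matrix (Fin n) (Fin n) ℝ) (hE : IsSpectralProj A θ E) :
    IsSpectralProj A (-θ) (S * E * S) ∧
    (∀ u : Fin n, (S * E * S) u u = E u u) ∧
    (∀ u : Fin n,
      E.mulVec (Pi.single u 1) ≠ 0 ↔ (S * E * S).mulVec (Pi.single u 1) ≠ 0) := by
  have hd2 : ∀ i, d i * d i = 1 := by
    intro i; rcases hd i with h | h <;> rw [h] <;> ring
  have hSS : S * S = 1 := by
    subst hS
    rw [Matrix.diagonal_mul_diagonal]
    rw [show (fun i => d i * d i) = fun _ : Fin n => (1 : ℝ) from funext hd2]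
    exact Matrix.diagonal_one
  have hSsym : S.IsSymm := by subst hS; exact Matrix.isSymm_diagonal d
  have hSinv : ∀ v : Fin n → ℝ, S.mulVec (S.mulVec v) = v := by
    intro v
    rw [Matrix.mulVec_mulVec, hSS, Matrix.one_mulVec]
  have hAS : ∀ v : Fin n → ℝ, A.mulVec (S.mulVec v) = -(S.mulVec (A.mulVec v)) := by
    intro v
    have h1 : S * A = -(A * S) := by
      have := congrArg (· * S) hbip
      simp only [Matrix.mul_assoc, hSS, Matrix.mul_one, Matrix.neg_mul] at this
      linear_combination (norm := noncomm_ring) this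
    have h2 : A * S = -(S * A) := by rw [h1, neg_neg]
    calc A.mulVec (S.mulVec v) = (A * S).mulVec v := by rw [Matrix.mulVec_mulVec]
      _ = (-(S * A)).mulVec v := by rw [h2]
      _ = -(S.mulVec (A.mulVec v)) := by rw [Matrix.neg_mulVec, Matrix.mulVec_mulVec]
  obtain ⟨hEsym, hEE, hEspec⟩ := hE
  have hmv : ∀ v : Fin n → ℝ, (S * E * S).mulVec v = S.mulVec (E.mulVec (S.mulVec v)) := by
    intro v; rw [Matrix.mulVec_mulVec, Matrix.mulVec_mulVec]
  refine ⟨⟨?_, ?_, ?_⟩, ?_, ?_⟩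
  · -- symmetry
    unfold Matrix.IsSymm
    rw [Matrix.transpose_mul, Matrix.transpose_mul, hSsym.eq, hEsym.eq, Matrix.mul_assoc]
  · -- idempotent
    calc S * E * S * (S * E * S) = S * E * (S * S) * E * S := by
          simp only [Matrix.mul_assoc]
      _ = S * (E * E) * S := by rw [hSS]; simp only [Matrix.mul_assoc, Matrix.mul_one]
      _ = S * E * S := by rw [hEE, Matrix.mul_assoc]
  · -- eigenvector characterization
    intro v
    constructor
    · intro hv
      have h1 : A.mulVec (S.mulVec v) = θ • S.mulVec v := by
        rw [hAS, hv]
        rw [Matrix.mulVec_smul]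
        simp [neg_smul]
      have h2 := (hEspec (S.mulVec v)).mp h1
      rw [hmv, h2, hSinv]
    · intro hv
      rw [hmv] at hv
      have h1 : E.mulVec (S.mulVec v) = S.mulVec v := by
        have := congrArg S.mulVec hv
        rwa [hSinv] at this
      have h2 := (hEspec (S.mulVec v)).mpr h1
      have h4 : (S * A * S).mulVec v = θ • v := by
        rw [show (S * A * S).mulVec v = S.mulVec (A.mulVec (S.mulVec v)) from by
          rw [Matrix.mulVec_mulVec, Matrix.mulVec_mulVec], h2, Matrix.mulVec_smul, hSinv]
      rw [hbip, Matrix.neg_mulVec, neg_eq_iff_eq_neg] at h4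
      rw [h4, neg_smul]
  · -- diagonal
    intro u
    subst hS
    rw [Matrix.mul_diagonal, Matrix.diagonal_mul]
    rcases hd u with h | h <;> rw [h] <;> ring
  · -- support
    intro u
    have hdu : d u ≠ 0 := by rcases hd u with h | h <;> rw [h] <;> norm_num
    have hSe : S.mulVec (Pi.single u 1) = d u • (Pi.single u 1 : Fin n → ℝ) := by
      subst hS
      rw [Matrix.diagonal_mulVec_single]
      funext i
      rcases eq_or_ne i u with rfl | h
      · simp
      · simp [Pi.single_eq_of_ne h]
    rw [hmv, hSe, Matrix.mulVec_smul, Matrix.mulVec_smul]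
    constructor
    · intro h hc
      apply h
      have := congrArg (fun w => (d u)⁻¹ • S.mulVec w) hc
      simp only [Matrix.mulVec_smul, hSinv, smul_smul,
        inv_mul_cancel₀ hdu, one_smul, Matrix.mulVec_zero, smul_zero] at this
      exact this
    · intro h hc
      apply h
      rw [hc]
      simp
end

section
/- Let A be an n×n real symmetric matrix that is bipartite (there is a ±1 diagonal matrix S with S·A·S = −A), let u be an index, let θ ≠ 0 be a real number in the eigenvalue support of u, and let E_θ be the orthogonal spectral projection of A for θ. Then (E_θ)_{u,u} ≤ 1/2. If, in addition, 0 belongs to the eigenvalue support of u (i.e., some vector w with A·w = 0 has w_u ≠ 0), then (E_θ)_{u,u} < 1/2. -/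
open Matrix
open scoped Kronecker

lemma orth_aux {n : ℕ} {A : Matrix (Fin n) (Fin n) ℝ} (hA : A.IsSymm)
    {θ μ : ℝ} (hne : θ ≠ μ) {v w : Fin n → ℝ}
    (hv : A.mulVec v = θ • v) (hw : A.mulVec w = μ • w) : v ⬝ᵥ w = 0 := by
  have h1 : v ⬝ᵥ (A.mulVec w) = (A.mulVec v) ⬝ᵥ w := by
    rw [dotProduct_mulVec]
    congr 1
    rw [← mulVec_transpose, hA]
  rw [hv, hw, dotProduct_smul, smul_dotProduct, smul_eq_mul, smul_eq_mul] at h1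
  have h2 := sub_eq_zero.mpr h1
  rw [← sub_mul] at h2
  rcases mul_eq_zero.mp h2 with h | h
  · exact absurd (sub_eq_zero.mp h) hne.symm
  · exact h

lemma diag_le_one_aux {n : ℕ} {Q : Matrix (Fin n) (Fin n) ℝ} (hs : Q.IsSymm)
    (hi : Q * Q = Q) (u : Fin n) : Q u u ≤ 1 := by
  have h : Q u u = ∑ k, (Q u k)^2 := by
    conv_lhs => rw [← hi, mul_apply]
    refine Finset.sum_congr rfl fun k _ => ?_
    rw [sq, hs.apply u k]
  have h2 : (Q u u)^2 ≤ ∑ k, (Q u k)^2 :=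
    Finset.single_le_sum (f := fun k => (Q u k)^2) (fun k _ => sq_nonneg _) (Finset.mem_univ u)
  nlinarith [h, h2]

lemma proj_add_aux {n : ℕ} (P W : Matrix (Fin n) (Fin n) ℝ) (c s : ℝ)
    (hPP : P * P = P) (hPW : P * W = 0) (hWP : W * P = 0) (hWW : W * W = s • W)
    (hcs : c * s = 1) : (P + c • W) * (P + c • W) = P + c • W := by
  rw [add_mul, mul_add, mul_add, hPP, Matrix.mul_smul, Matrix.smul_mul, Matrix.smul_mul,
    Matrix.mul_smul, hPW, hWP, hWW, smul_zero, add_zero, zero_add,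
    smul_smul, smul_smul, mul_assoc, hcs, mul_one]

/-- for a bipartite real symmetric matrix `A`, a nonzero `θ` in the eigenvalue
support of `u` satisfies `(E_θ)_{u,u} ≤ 1/2`; if moreover `0` is in the eigenvalue support
of `u` (some null vector of `A` is nonzero at `u`), then `(E_θ)_{u,u} < 1/2`. -/
theorem stmt3 {n : ℕ} (A : Matrix (Fin n) (Fin n) ℝ) (hA : A.IsSymm)
    (d : Fin n → ℝ) (hd : ∀ i, d i = 1 ∨ d i = -1)
    (S : Matrix (Fin n) (Fin n) ℝ) (hS : S = Matrix.diagonal d)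
    (hbip : S * A * S = -A)
    (u : Fin n) (θ : ℝ) (hθ : θ ≠ 0)
    (Eθ : Matrix (Fin n) (Fin n) ℝ) (hEθ : IsSpectralProj A θ Eθ)
    (hsupp : Eθ.mulVec (Pi.single u 1) ≠ 0) :
    Eθ u u ≤ 1 / 2 ∧
    ((∃ w : Fin n → ℝ, A.mulVec w = 0 ∧ w u ≠ 0) → Eθ u u < 1 / 2) := by
  obtain ⟨hEsym, hEP, hEiff⟩ := hEθ
  have hdd : ∀ i, d i * d i = 1 := fun i => by rcases hd i with h | h <;> rw [h] <;> norm_num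
  have hSS : S * S = 1 := by
    rw [hS, diagonal_mul_diagonal]
    simp only [hdd]
    exact diagonal_one
  have hSsym : Sᵀ = S := by rw [hS]; exact diagonal_transpose d
  have hSinv : ∀ x : Fin n → ℝ, S.mulVec (S.mulVec x) = x := by
    intro x; rw [mulVec_mulVec, hSS, one_mulVec]
  set F := S * Eθ * S with hF
  have hFsym : F.IsSymm := by
    show Fᵀ = F
    rw [hF, transpose_mul, transpose_mul, hSsym, hEsym, Matrix.mul_assoc]
  have hFP : F * F = F := by
    rw [hF]
    simp only [Matrix.mul_assoc]
    rw [← Matrix.mul_assoc S S (Eθ * S), hSS, one_mul, ← Matrix.mul_assoc Eθ Eθ S, hEP]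
  have hSAS : ∀ x : Fin n → ℝ, S.mulVec (A.mulVec (S.mulVec x)) = -(A.mulVec x) := by
    intro x
    rw [mulVec_mulVec, mulVec_mulVec, hbip, neg_mulVec]
  have key : ∀ v : Fin n → ℝ,
      A.mulVec (S.mulVec v) = θ • S.mulVec v ↔ A.mulVec v = (-θ) • v := by
    intro v
    constructor
    · intro h
      have h2 := congrArg S.mulVec h
      rw [hSAS, mulVec_smul, hSinv] at h2
      rw [neg_smul, ← h2, neg_neg]
    · intro h
      have : A.mulVec (S.mulVec v) = S.mulVec (S.mulVec (A.mulVec (S.mulVec v))) :=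
        (hSinv _).symm
      rw [this, hSAS, h, neg_smul, neg_neg, mulVec_smul]
  have hFiff : ∀ v : Fin n → ℝ, A.mulVec v = (-θ) • v ↔ F.mulVec v = v := by
    intro v
    have hFv : F.mulVec v = S.mulVec (Eθ.mulVec (S.mulVec v)) := by
      rw [mulVec_mulVec, mulVec_mulVec, hF, Matrix.mul_assoc]
    rw [hFv]
    constructor
    · intro h
      have h2 : Eθ.mulVec (S.mulVec v) = S.mulVec v := (hEiff _).mp ((key v).mpr h)
      rw [h2, hSinv]
    · intro h
      have h2 := congrArg S.mulVec h
      rw [hSinv] at h2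
      exact (key v).mp ((hEiff _).mpr h2)
  have hne : θ ≠ -θ := fun h => hθ (by linarith [h])
  have hEvec : ∀ x : Fin n → ℝ, A.mulVec (Eθ.mulVec x) = θ • Eθ.mulVec x :=
    fun x => (hEiff _).mpr (by rw [mulVec_mulVec, hEP])
  have hFvec : ∀ x : Fin n → ℝ, A.mulVec (F.mulVec x) = (-θ) • F.mulVec x :=
    fun x => (hFiff _).mpr (by rw [mulVec_mulVec, hFP])
  have hEF : Eθ * F = 0 := by
    ext i j
    have h0 : (Eθ.mulVec (Pi.single i 1)) ⬝ᵥ (F.mulVec (Pi.single j 1)) = 0 :=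
      orth_aux hA hne (hEvec _) (hFvec _)
    rw [mulVec_single_one, mulVec_single_one] at h0
    change Eθᵀ i ⬝ᵥ Fᵀ j = 0 at h0
    rw [hEsym] at h0
    rw [mul_apply, Matrix.zero_apply]
    rw [← h0]
    rfl
  have hFE : F * Eθ = 0 := by
    calc F * Eθ = (Eθ * F)ᵀ := by rw [transpose_mul, hEsym, hFsym]
    _ = 0 := by rw [hEF, transpose_zero]
  set P := Eθ + F with hP
  have hPsym : P.IsSymm := by
    show Pᵀ = P
    rw [hP, transpose_add, hEsym, hFsym]
  have hPP : P * P = P := by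
    rw [hP, add_mul, mul_add, mul_add, hEP, hFP, hEF, hFE]
    abel
  have hFuu : F u u = Eθ u u := by
    rw [hF, hS, mul_diagonal, diagonal_mul]
    rcases hd u with h | h <;> rw [h] <;> ring
  have hPuu : P u u = Eθ u u + F u u := rfl
  have h1 : P u u ≤ 1 := diag_le_one_aux hPsym hPP u
  constructor
  · rw [hPuu, hFuu] at h1; linarith
  · rintro ⟨w, hw, hwu⟩
    have hw0 : A.mulVec w = (0:ℝ) • w := by rw [hw, zero_smul]
    have hEw : Eθ.mulVec w = 0 := by
      funext i
      have h0 : (Eθ.mulVec (Pi.single i 1)) ⬝ᵥ w = 0 := orth_aux hA hθ (hEvec _) hw0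
      rw [mulVec_single_one] at h0
      change Eθᵀ i ⬝ᵥ w = 0 at h0
      rw [hEsym] at h0
      simpa [mulVec, dotProduct] using h0
    have hFw : F.mulVec w = 0 := by
      funext i
      have h0 : (F.mulVec (Pi.single i 1)) ⬝ᵥ w = 0 :=
        orth_aux hA (neg_ne_zero.mpr hθ) (hFvec _) hw0
      rw [mulVec_single_one] at h0
      change Fᵀ i ⬝ᵥ w = 0 at h0
      rw [hFsym] at h0
      simpa [mulVec, dotProduct] using h0
    have hPw : P.mulVec w = 0 := by rw [hP, add_mulVec, hEw, hFw, add_zero]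
    have hwpos : 0 < w ⬝ᵥ w := by
      have hle : w u * w u ≤ ∑ i, w i * w i :=
        Finset.single_le_sum (f := fun i => w i * w i) (fun i _ => mul_self_nonneg _)
          (Finset.mem_univ u)
      have : 0 < w u * w u := mul_self_pos.mpr hwu
      calc (0:ℝ) < w u * w u := this
      _ ≤ ∑ i, w i * w i := hle
      _ = w ⬝ᵥ w := rfl
    set c : ℝ := (w ⬝ᵥ w)⁻¹ with hc
    have hcs : c * (w ⬝ᵥ w) = 1 := inv_mul_cancel₀ (ne_of_gt hwpos)
    set W : Matrix (Fin n) (Fin n) ℝ := Matrix.of (fun i j => w i * w j) with hW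
    have hWsym : W.IsSymm := by
      show Wᵀ = W
      ext i j
      simp [hW, mul_comm]
    have hPW : P * W = 0 := by
      ext i j
      rw [mul_apply, Matrix.zero_apply]
      have h0 : (P.mulVec w) i = 0 := by rw [hPw]; rfl
      calc ∑ k, P i k * W k j = (∑ k, P i k * w k) * w j := by
            rw [Finset.sum_mul]
            exact Finset.sum_congr rfl fun k _ => (mul_assoc _ _ _).symm
      _ = (P.mulVec w) i * w j := rfl
      _ = 0 := by rw [h0, zero_mul]
    have hWP : W * P = 0 := by
      calc W * P = (P * W)ᵀ := by rw [transpose_mul, hPsym, hWsym]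
      _ = 0 := by rw [hPW, transpose_zero]
    have hWW : W * W = (w ⬝ᵥ w) • W := by
      ext i j
      rw [mul_apply, Matrix.smul_apply, smul_eq_mul]
      calc ∑ k, W i k * W k j = ∑ k, (w k * w k) * (w i * w j) :=
            Finset.sum_congr rfl fun k _ => by simp [hW]; ring
      _ = (∑ k, w k * w k) * (w i * w j) := (Finset.sum_mul _ _ _).symm
      _ = (w ⬝ᵥ w) * W i j := rfl
    set Q : Matrix (Fin n) (Fin n) ℝ := P + c • W with hQ
    have hQsym : Q.IsSymm := by
      show Qᵀ = Q
      rw [hQ, transpose_add, transpose_smul, hPsym, hWsym]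
    have hQQ : Q * Q = Q := by
      rw [hQ]
      exact proj_add_aux P W c (w ⬝ᵥ w) hPP hPW hWP hWW hcs
    have hQ1 : Q u u ≤ 1 := diag_le_one_aux hQsym hQQ u
    have hQuu : Q u u = Eθ u u + F u u + c * (w u * w u) := by
      rw [hQ, Matrix.add_apply, Matrix.smul_apply, smul_eq_mul]
      rfl
    have hcpos : 0 < c * (w u * w u) :=
      mul_pos (inv_pos.mpr hwpos) (mul_self_pos.mpr hwu)
    rw [hQuu, hFuu] at hQ1
    linarith
end

section
/- Let A be an n×n real symmetric matrix that is bipartite (there is a ±1 diagonal matrix S with S·A·S = −A). Then for every real t and every index u, the diagonal entry exp(itA)_{u,u} is a real number (its imaginary part is zero), and exp(itA)_{u,u} = exp(−itA)_{u,u}. -/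
open Matrix
open scoped Kronecker

/-- for a bipartite real symmetric matrix `A`, each diagonal entry of
`exp(itA)` is real, and `exp(itA)_{u,u} = exp(-itA)_{u,u}`. -/
theorem stmt4 {n : ℕ} (A : Matrix (Fin n) (Fin n) ℝ) (hA : A.IsSymm)
    (d : Fin n → ℝ) (hd : ∀ i, d i = 1 ∨ d i = -1)
    (S : Matrix (Fin n) (Fin n) ℝ) (hS : S = Matrix.diagonal d)
    (hbip : S * A * S = -A) :
    ∀ (t : ℝ) (u : Fin n),
      (transition A t u u).im = 0 ∧ transition A t u u = transition A (-t) u u := by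
  intro t u
  set B : Matrix (Fin n) (Fin n) ℂ := A.map (fun x : ℝ => (x : ℂ)) with hB
  set Sc : Matrix (Fin n) (Fin n) ℂ := Matrix.diagonal (fun i => (d i : ℂ)) with hSc
  have hd2 : ∀ i, (d i : ℂ) * (d i : ℂ) = 1 := by
    intro i; rcases hd i with h | h <;> simp [h]
  have hScSc : Sc * Sc = 1 := by
    rw [hSc, Matrix.diagonal_mul_diagonal]
    simp only [hd2]
    exact Matrix.diagonal_one
  have hScUnit : IsUnit Sc := ⟨⟨Sc, Sc, hScSc, hScSc⟩, rfl⟩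
  have hScInv : Sc⁻¹ = Sc := Matrix.inv_eq_right_inv hScSc
  have hmap : Sc * B * Sc = -B := by
    have h1 : (S * A * S).map (⇑Complex.ofRealHom) = (-A).map (⇑Complex.ofRealHom) := by
      rw [hbip]
    rw [Matrix.map_mul, Matrix.map_mul] at h1
    have hSmap : S.map (⇑Complex.ofRealHom) = Sc := by
      rw [hS, hSc]
      ext i j
      by_cases h : i = j <;> simp [Matrix.diagonal, h, Matrix.map_apply]
    rw [hSmap] at h1
    have hBmap : A.map (⇑Complex.ofRealHom) = B := rfl
    rw [hBmap] at h1
    rw [h1]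
    ext i j; simp [hB, Matrix.map_apply]
  have key : transition A (-t) = Sc * transition A t * Sc := by
    have hc := Matrix.exp_conj Sc ((Complex.I * t) • B) hScUnit
    rw [hScInv] at hc
    unfold transition
    rw [← hB, ← hc]
    congr 1
    rw [Matrix.mul_smul, Matrix.smul_mul, hmap, smul_neg, ← neg_smul]
    congr 1
    push_cast
    ring
  have hentry : transition A (-t) u u = transition A t u u := by
    rw [key, hSc, Matrix.mul_apply]
    simp only [Matrix.diagonal_mul, Matrix.mul_diagonal, Matrix.diagonal_apply]
    rw [Finset.sum_eq_single u]
    · rw [if_pos rfl]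
      rcases hd u with h | h <;> simp [h]
    · intro b _ hb; rw [if_neg hb]; ring
    · intro h; exact absurd (Finset.mem_univ u) h
  have hBH : Bᴴ = B := by
    ext i j
    rw [Matrix.conjTranspose_apply, hB]
    simp only [Matrix.map_apply, RCLike.star_def, Complex.conj_ofReal]
    exact_mod_cast congrFun (congrFun hA.symm j) i
  have hconj : transition A (-t) = (transition A t)ᴴ := by
    unfold transition
    rw [← Matrix.exp_conjTranspose]
    congr 1
    rw [Matrix.conjTranspose_smul, hBH]
    congr 1
    simp [Complex.ext_iff]
  have hstar : starRingEnd ℂ (transition A t u u) = transition A t u u := by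
    conv_lhs => rw [show starRingEnd ℂ (transition A t u u) = (transition A t)ᴴ u u from rfl]
    rw [← hconj, hentry]
  exact ⟨(Complex.conj_eq_iff_im).mp hstar, hentry.symm⟩
end

section
/- Let A be an n×n real symmetric matrix that is bipartite (there is a ±1 diagonal matrix S with S·A·S = −A), and let u be an index such that 0 is not in the eigenvalue support of u, i.e., every vector w with A·w = 0 satisfies w_u = 0. Then u is not sedentary: inf_{t>0} |exp(itA)_{u,u}| = 0; equivalently, for every ε > 0 there exists t > 0 with |exp(itA)_{u,u}| < ε. -/
open Matrix
open scoped Kronecker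

attribute [local instance] Matrix.linftyOpNormedAddCommGroup Matrix.linftyOpNormedRing
  Matrix.linftyOpNormedAlgebra

/-- If every null vector of the real symmetric `A` vanishes at `u`, then `e_u` is in the
range of `A`. -/
lemma stmt5_exists_preimage {n : ℕ} (A : Matrix (Fin n) (Fin n) ℝ) (hA : A.IsSymm) (u : Fin n)
    (hker : ∀ w : Fin n → ℝ, A.mulVec w = 0 → w u = 0) :
    ∃ v : Fin n → ℝ, A.mulVec v = Pi.single u 1 := by
  by_contra h
  push_neg at h
  have hnm : (Pi.single u 1 : Fin n → ℝ) ∉ LinearMap.range A.mulVecLin := by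
    rintro ⟨v, hv⟩
    exact h v hv
  obtain ⟨f, hf0, hfbot⟩ :=
    Submodule.exists_dual_map_eq_bot_of_notMem hnm inferInstance
  set w : Fin n → ℝ := fun i => f (fun j => if i = j then (1:ℝ) else 0) with hw
  have hfy : ∀ y : Fin n → ℝ, f y = w ⬝ᵥ y := by
    intro y
    conv_lhs => rw [pi_eq_sum_univ y]
    rw [map_sum]
    simp only [f.map_smul, smul_eq_mul]
    simp [dotProduct, hw, mul_comm]
  have hzero : ∀ x : Fin n → ℝ, w ⬝ᵥ A.mulVec x = 0 := by
    intro x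
    rw [← hfy]
    have : f (A.mulVec x) ∈ (LinearMap.range A.mulVecLin).map f := by
      exact ⟨A.mulVec x, ⟨x, rfl⟩, rfl⟩
    rw [hfbot] at this
    simpa using this
  have hAw : A.mulVec w = 0 := by
    have h1 : ∀ x : Fin n → ℝ, (w ᵥ* A) ⬝ᵥ x = 0 := by
      intro x
      rw [← Matrix.dotProduct_mulVec]
      exact hzero x
    have h2 : (w ᵥ* A) ⬝ᵥ (w ᵥ* A) = 0 := h1 _
    have h3 : w ᵥ* A = 0 := dotProduct_self_eq_zero.mp h2
    calc A.mulVec w = Aᵀ.mulVec w := by rw [hA.eq]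
      _ = w ᵥ* A := Matrix.mulVec_transpose A w
      _ = 0 := h3
  have hwu : w u = 0 := hker w hAw
  have hfw : f (Pi.single u 1) = w u := by
    rw [hfy]
    simp [dotProduct, Pi.single_apply, hw, eq_comm]
  exact hf0 (by rw [hfw, hwu])

/-- for a bipartite real symmetric matrix `A`, if `0` is not in the eigenvalue
support of `u` (every null vector of `A` vanishes at `u`), then `u` is not sedentary:
`inf_{t>0} |exp(itA)_{u,u}| = 0`; equivalently for every `ε > 0` there is `t > 0` with
`|exp(itA)_{u,u}| < ε`. -/
theorem stmt5 {n : ℕ} (A : Matrix (Fin n) (Fin n) ℝ) (hA : A.IsSymm)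
    (d : Fin n → ℝ) (hd : ∀ i, d i = 1 ∨ d i = -1)
    (S : Matrix (Fin n) (Fin n) ℝ) (hS : S = Matrix.diagonal d)
    (hbip : S * A * S = -A)
    (u : Fin n) (hker : ∀ w : Fin n → ℝ, A.mulVec w = 0 → w u = 0) :
    (⨅ t : {t : ℝ // 0 < t}, ‖transition A t u u‖) = 0 ∧
    ∀ ε : ℝ, 0 < ε → ∃ t : ℝ, 0 < t ∧ ‖transition A t u u‖ < ε := by
  classical
  set B : Matrix (Fin n) (Fin n) ℂ := A.map (fun x : ℝ => (x : ℂ)) with hB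
  set N : Matrix (Fin n) (Fin n) ℂ := Complex.I • B with hN
  set X : ℝ → Matrix (Fin n) (Fin n) ℂ := fun t => NormedSpace.exp ((t : ℂ) • N) with hX
  have htrans : ∀ t : ℝ, transition A t = X t := by
    intro t
    simp only [transition, hX, hN, ← hB, smul_smul, mul_comm]
  -- B is Hermitian
  have hBH : Bᴴ = B := by
    ext i j
    simp [hB, Matrix.conjTranspose_apply, Complex.conj_ofReal]
    exact congrFun (congrFun hA.eq i) j
  -- conjTranspose of t•N
  have hNH : ∀ t : ℝ, ((t : ℂ) • N)ᴴ = -((t : ℂ) • N) := by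
    intro t
    simp [hN, Matrix.conjTranspose_smul, Matrix.conjTranspose_smul, hBH, Complex.conj_ofReal,
      Complex.conj_I, smul_smul, mul_comm]
  -- X t is unitary
  have hXH : ∀ t : ℝ, (X t)ᴴ = NormedSpace.exp (-((t : ℂ) • N)) := by
    intro t
    rw [hX, ← Matrix.exp_conjTranspose, hNH]
  have hXunit : ∀ t : ℝ, X t * (X t)ᴴ = 1 := by
    intro t
    rw [hXH, hX]
    rw [← Matrix.exp_add_of_commute ((t : ℂ) • N) (-((t : ℂ) • N)) (Commute.neg_right (Commute.refl _))]
    simp [NormedSpace.exp_zero]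
  -- entries of X are bounded by 1
  have hentry : ∀ (t : ℝ) (j : Fin n), ‖X t u j‖ ≤ 1 := by
    intro t j
    have h1 : (X t * (X t)ᴴ) u u = 1 := by rw [hXunit]; simp [Matrix.one_apply_eq]
    have h2 : (∑ k, Complex.normSq (X t u k) : ℂ) = 1 := by
      rw [← h1, Matrix.mul_apply]
      push_cast
      refine Finset.sum_congr rfl fun k _ => ?_
      rw [Matrix.conjTranspose_apply]
      simp [Complex.mul_conj]
    have h3 : (∑ k, Complex.normSq (X t u k)) = 1 := by
      exact_mod_cast h2
    have h4 : Complex.normSq (X t u j) ≤ 1 := by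
      rw [← h3]
      exact Finset.single_le_sum (fun k _ => Complex.normSq_nonneg _) (Finset.mem_univ j)
    have h5 : ‖X t u j‖ ^ 2 ≤ 1 := by rwa [Complex.sq_norm]
    nlinarith [norm_nonneg (X t u j)]
  -- bipartite: X t u u is real
  set dc : Fin n → ℂ := fun i => ((d i : ℝ) : ℂ) with hdc
  set Sc : Matrix (Fin n) (Fin n) ℂ := Matrix.diagonal dc with hSc
  have hScSc : Sc * Sc = 1 := by
    rw [hSc, Matrix.diagonal_mul_diagonal]
    ext i j
    rcases hd i with h | h <;>
      simp [Matrix.diagonal_apply, hdc, h, Matrix.one_apply] <;> norm_num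
  have hSmap : S.map (fun x : ℝ => (x : ℂ)) = Sc := by
    rw [hS, hSc]
    ext i j
    simp [Matrix.diagonal_apply, hdc, apply_ite (fun x : ℝ => (x : ℂ))]
  have hSBS : Sc * B * Sc = -B := by
    have := congrArg (Matrix.map · (fun x : ℝ => (x : ℂ))) hbip
    rw [show (fun x : ℝ => (x : ℂ)) = ⇑Complex.ofRealHom from rfl] at this
    rw [Matrix.map_mul, Matrix.map_mul] at this
    rw [show (S.map ⇑Complex.ofRealHom) = Sc from hSmap] at this
    rw [show (A.map ⇑Complex.ofRealHom) = B from rfl] at this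
    rw [this]
    ext i j
    simp [hB]
  have hreal : ∀ t : ℝ, (starRingEnd ℂ) (X t u u) = X t u u := by
    intro t
    have hconj : (starRingEnd ℂ) (X t u u) = (X t)ᴴ u u := by
      simp [Matrix.conjTranspose_apply]
    have hunit : IsUnit Sc := ⟨⟨Sc, Sc, hScSc, hScSc⟩, rfl⟩
    have hinv : Sc⁻¹ = Sc := Matrix.inv_eq_right_inv hScSc
    have hconjN : Sc * ((t : ℂ) • N) * Sc = -((t : ℂ) • N) := by
      have : Sc * N * Sc = -N := by
        rw [hN, Matrix.mul_smul, Matrix.smul_mul, hSBS]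
        simp
      rw [Matrix.mul_smul, Matrix.smul_mul, this]
      simp
    have hexp := Matrix.exp_conj Sc ((t : ℂ) • N) hunit
    rw [hinv, hconjN] at hexp
    have hd2 : dc u * dc u = 1 := by
      rcases hd u with h | h <;> simp [hdc, h] <;> norm_num
    have hXuu : (X t)ᴴ u u = X t u u := by
      rw [hXH t, hexp, hSc, Matrix.mul_diagonal, Matrix.diagonal_mul]
      rw [mul_comm (dc u), mul_assoc, hd2, mul_one]
    rw [hconj, hXuu]
  -- preimage vector
  obtain ⟨v, hv⟩ := stmt5_exists_preimage A hA u hker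
  set vc : Fin n → ℂ := fun i => ((v i : ℝ) : ℂ) with hvc
  have hBv : B.mulVec vc = Pi.single u 1 := by
    ext i
    have := congrFun hv i
    simp only [Matrix.mulVec, dotProduct] at this ⊢
    have : ((∑ j, A i j * v j : ℝ) : ℂ) = ((Pi.single u 1 : Fin n → ℝ) i : ℂ) := by
      exact_mod_cast congrArg (fun x : ℝ => (x : ℂ)) this
    rw [show (∑ j, B i j * vc j) = ((∑ j, A i j * v j : ℝ) : ℂ) by push_cast [hB, hvc]; rfl]
    rw [this]
    simp [Pi.single_apply, apply_ite (fun x : ℝ => (x : ℂ))]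
  -- the linear functional
  set φ : Matrix (Fin n) (Fin n) ℂ →ₗ[ℂ] ℂ :=
    { toFun := fun M => M.mulVec vc u
      map_add' := fun M₁ M₂ => by simp [Matrix.add_mulVec]
      map_smul' := fun c M => by simp [Matrix.smul_mulVec] } with hφ
  set φL : Matrix (Fin n) (Fin n) ℂ →L[ℂ] ℂ := LinearMap.toContinuousLinearMap φ with hφL
  set H : ℝ → ℂ := fun t => (X t).mulVec vc u with hH
  have hcontX : Continuous X := by
    rw [hX]
    exact NormedSpace.exp_continuous.comp (by fun_prop)
  have hcontg : Continuous fun t : ℝ => X t u u := by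
    exact ((continuous_apply u).comp ((continuous_apply u).comp hcontX))
  have hH' : ∀ t : ℝ, HasDerivAt H (Complex.I * (X t u u)) t := by
    intro t
    have h1 : HasDerivAt (fun z : ℂ => NormedSpace.exp (z • N))
        (NormedSpace.exp ((t : ℂ) • N) * N) (t : ℂ) := hasDerivAt_exp_smul_const N (t : ℂ)
    have h2 : HasDerivAt (fun z : ℂ => φL (NormedSpace.exp (z • N)))
        (φL (NormedSpace.exp ((t : ℂ) • N) * N)) (t : ℂ) :=
      φL.hasFDerivAt.comp_hasDerivAt _ h1
    have h3 := h2.comp_ofReal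
    have hval : φL (NormedSpace.exp ((t : ℂ) • N) * N) = Complex.I * (X t u u) := by
      show ((NormedSpace.exp ((t : ℂ) • N) * N).mulVec vc) u = _
      rw [← Matrix.mulVec_mulVec]
      rw [hN, Matrix.smul_mulVec, hBv]
      rw [Matrix.mulVec_smul]
      simp [Matrix.mulVec_single, hX]
      rfl
    rw [hval] at h3
    exact h3
  -- bound on H
  set C : ℝ := ∑ j, ‖vc j‖ with hC
  have hCnonneg : 0 ≤ C := Finset.sum_nonneg fun j _ => norm_nonneg _
  have hHbound : ∀ t : ℝ, ‖H t‖ ≤ C := by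
    intro t
    rw [hH]
    calc ‖(X t).mulVec vc u‖ = ‖∑ j, X t u j * vc j‖ := by
          simp [Matrix.mulVec, dotProduct]
      _ ≤ ∑ j, ‖X t u j * vc j‖ := by
          exact norm_sum_le _ _
      _ ≤ ∑ j, ‖vc j‖ := by
          apply Finset.sum_le_sum
          intro j _
          rw [norm_mul]
          calc ‖X t u j‖ * ‖vc j‖
              ≤ 1 * ‖vc j‖ :=
                mul_le_mul_of_nonneg_right (hentry t j) (norm_nonneg _)
            _ = ‖vc j‖ := one_mul _
  -- integral bound
  have hintbound : ∀ T : ℝ, ‖∫ t in (0:ℝ)..T, X t u u‖ ≤ 2 * C := by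
    intro T
    have hftc : (∫ t in (0:ℝ)..T, Complex.I * (X t u u)) = H T - H 0 := by
      apply intervalIntegral.integral_eq_sub_of_hasDerivAt
      · intro t _
        exact hH' t
      · exact ((continuous_const.mul hcontg).intervalIntegrable 0 T)
    rw [intervalIntegral.integral_const_mul] at hftc
    have habs := congrArg (‖·‖) hftc
    rw [norm_mul, Complex.norm_I, one_mul] at habs
    rw [habs]
    calc ‖H T - H 0‖ ≤ ‖H T‖ + ‖H 0‖ := by
          exact (norm_sub_le _ _)
      _ ≤ C + C := add_le_add (hHbound T) (hHbound 0)
      _ = 2 * C := by ring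
  -- r : real part
  set r : ℝ → ℝ := fun t => (X t u u).re with hr
  have hrcont : Continuous r := Complex.continuous_re.comp hcontg
  have hgr : ∀ t : ℝ, X t u u = ((r t : ℝ) : ℂ) := by
    intro t
    exact (Complex.conj_eq_iff_re.mp (hreal t)).symm
  have hr0 : r 0 = 1 := by
    have : X 0 = 1 := by
      rw [hX]
      simp [NormedSpace.exp_zero]
    rw [hr]
    simp [this, Matrix.one_apply_eq]
  -- main claim
  have main : ∀ ε : ℝ, 0 < ε → ∃ t : ℝ, 0 < t ∧ ‖X t u u‖ < ε := by
    intro ε hε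
    set ε' : ℝ := min ε 1 with hε'def
    have hε' : 0 < ε' := lt_min hε one_pos
    have hε'le : ε' ≤ ε := min_le_left _ _
    have hε'1 : ε' ≤ 1 := min_le_right _ _
    set T : ℝ := (4 * C + 4) / ε' with hT
    have hTpos : 0 < T := by positivity
    -- find a point where r < ε'/2
    have hsmall : ∃ t₀ ∈ Set.Icc (0:ℝ) T, r t₀ < ε' / 2 := by
      by_contra hcon
      push_neg at hcon
      have hmono : (∫ t in (0:ℝ)..T, (ε' / 2)) ≤ ∫ t in (0:ℝ)..T, r t := by
        exact intervalIntegral.integral_mono_on (μ := MeasureTheory.volume) hTpos.le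
          (intervalIntegrable_const (μ := MeasureTheory.volume) (c := ε' / 2))
          (hrcont.intervalIntegrable 0 T)
          (fun t ht => hcon t ht)
      rw [intervalIntegral.integral_const, smul_eq_mul, sub_zero] at hmono
      have hre : (∫ t in (0:ℝ)..T, r t) = (∫ t in (0:ℝ)..T, X t u u).re := by
        have := Complex.reCLM.intervalIntegral_comp_comm
          (hcontg.intervalIntegrable (μ := MeasureTheory.volume) 0 T)
        simpa [hr] using this
      have hle : (∫ t in (0:ℝ)..T, X t u u).re ≤ 2 * C := by
        calc (∫ t in (0:ℝ)..T, X t u u).re ≤ ‖∫ t in (0:ℝ)..T, X t u u‖ :=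
              Complex.re_le_norm _
          _ ≤ 2 * C := hintbound T
      have hTcalc : T * (ε' / 2) = 2 * C + 2 := by
        field_simp [hT]
        rw [hT, div_mul_cancel₀ _ hε'.ne']; ring
      rw [hre] at hmono
      linarith
    obtain ⟨t₀, ht₀mem, ht₀⟩ := hsmall
    -- intermediate value
    have hmem : ε' / 2 ∈ Set.Icc (r t₀) (r 0) := by
      constructor
      · exact ht₀.le
      · rw [hr0]; linarith
    obtain ⟨t, htmem, hrt⟩ :=
      intermediate_value_Icc' ht₀mem.1 (hrcont.continuousOn) hmem
    have htpos : 0 < t := by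
      rcases lt_or_eq_of_le htmem.1 with h | h
      · exact h
      · exfalso
        rw [← h] at hrt
        rw [hr0] at hrt
        linarith
    refine ⟨t, htpos, ?_⟩
    rw [hgr t, Complex.norm_real, Real.norm_eq_abs, hrt, abs_of_pos (by linarith)]
    linarith
  constructor
  · have hbdd : BddBelow (Set.range fun t : {t : ℝ // 0 < t} =>
        ‖transition A t u u‖) := by
      refine ⟨0, ?_⟩
      rintro x ⟨t, rfl⟩
      exact norm_nonneg _
    apply le_antisymm
    · by_contra hlt
      push_neg at hlt
      obtain ⟨t, ht, habs⟩ := main _ hlt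
      have hle : (⨅ t : {t : ℝ // 0 < t}, ‖transition A t u u‖)
          ≤ ‖transition A t u u‖ := ciInf_le hbdd ⟨t, ht⟩
      rw [htrans t] at hle
      linarith
    · exact le_ciInf fun t => norm_nonneg _
  · intro ε hε
    obtain ⟨t, ht, habs⟩ := main ε hε
    exact ⟨t, ht, by rw [htrans t]; exact habs⟩
end

section
/- Let A be an n×n real symmetric matrix that is bipartite (there is a ±1 diagonal matrix S with S·A·S = −A) and nonsingular (det A ≠ 0). Then no vertex is sedentary: for every index u, inf_{t>0} |exp(itA)_{u,u}| = 0. -/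
open Matrix
open scoped Kronecker

/-- Entry of `P * exp(z•C)` is differentiable in `z`, with the obvious derivative. -/
private lemma entry_mul_exp_hasDerivAt {n : ℕ} (C P : Matrix (Fin n) (Fin n) ℂ)
    (u v : Fin n) (z : ℂ) :
    HasDerivAt (fun z : ℂ => (P * NormedSpace.exp (z • C)) u v)
      ((P * (NormedSpace.exp (z • C) * C)) u v) z := by
  letI : SeminormedRing (Matrix (Fin n) (Fin n) ℂ) := Matrix.linftyOpSemiNormedRing
  letI : NormedRing (Matrix (Fin n) (Fin n) ℂ) := Matrix.linftyOpNormedRing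
  letI : NormedAlgebra ℂ (Matrix (Fin n) (Fin n) ℂ) := Matrix.linftyOpNormedAlgebra
  have hder := hasDerivAt_exp_smul_const (𝕂 := ℂ) C z
  let L : Matrix (Fin n) (Fin n) ℂ →ₗ[ℂ] ℂ :=
    { toFun := fun M => (P * M) u v
      map_add' := fun M N => by simp [Matrix.mul_add]
      map_smul' := fun c M => by simp [Matrix.mul_smul] }
  have h := (L.toContinuousLinearMap.hasFDerivAt
      (x := NormedSpace.exp (z • C))).comp_hasDerivAt z hder
  exact h

private lemma exp_mul_comm {n : ℕ} (C : Matrix (Fin n) (Fin n) ℂ) (z : ℂ) :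
    NormedSpace.exp (z • C) * C = C * NormedSpace.exp (z • C) := by
  letI : SeminormedRing (Matrix (Fin n) (Fin n) ℂ) := Matrix.linftyOpSemiNormedRing
  letI : NormedRing (Matrix (Fin n) (Fin n) ℂ) := Matrix.linftyOpNormedRing
  letI : NormedAlgebra ℂ (Matrix (Fin n) (Fin n) ℂ) := Matrix.linftyOpNormedAlgebra
  exact (((Commute.refl C).smul_left z).exp_left).eq

private lemma exp_mul_exp_neg {n : ℕ} (X : Matrix (Fin n) (Fin n) ℂ) :
    NormedSpace.exp X * NormedSpace.exp (-X) = 1 := by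
  rw [← Matrix.exp_add_of_commute _ _ ((Commute.refl X).neg_right), add_neg_cancel,
    NormedSpace.exp_zero]

private lemma exp_conj_invol {n : ℕ} (S : Matrix (Fin n) (Fin n) ℂ) (hS : S * S = 1)
    (X : Matrix (Fin n) (Fin n) ℂ) :
    NormedSpace.exp (S * X * S) = S * NormedSpace.exp X * S := by
  have hinv : S⁻¹ = S := Matrix.inv_eq_right_inv hS
  have := Matrix.exp_conj S X ⟨⟨S, S, hS, hS⟩, rfl⟩
  rwa [hinv] at this

/-- a nonsingular bipartite weighted graph has no sedentary vertex. -/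
theorem stmt6 {n : ℕ} (A : Matrix (Fin n) (Fin n) ℝ) (hA : A.IsSymm)
    (d : Fin n → ℝ) (hd : ∀ i, d i = 1 ∨ d i = -1)
    (S : Matrix (Fin n) (Fin n) ℝ) (hS : S = Matrix.diagonal d)
    (hbip : S * A * S = -A)
    (hdet : A.det ≠ 0) :
    ∀ u : Fin n, (⨅ t : {t : ℝ // 0 < t}, ‖transition A t u u‖) = 0 := by
  intro u
  haveI : Nonempty {t : ℝ // 0 < t} := ⟨⟨1, one_pos⟩⟩
  set B : Matrix (Fin n) (Fin n) ℂ := A.map (fun x : ℝ => (x : ℂ)) with hBdef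
  set C : Matrix (Fin n) (Fin n) ℂ := Complex.I • B with hCdef
  have htrans : ∀ t : ℝ, transition A t = NormedSpace.exp ((t : ℂ) • C) := by
    intro t
    unfold transition
    rw [hCdef, smul_smul, mul_comm]
  set f : ℝ → ℂ := fun t => (NormedSpace.exp ((t : ℂ) • C)) u u with hfdef
  -- basic matrix facts
  have hB_symm : Bᴴ = B := by
    ext i j
    simp only [hBdef, conjTranspose_apply, Matrix.map_apply, Complex.star_def,
      Complex.conj_ofReal, Complex.ofReal_inj]
    exact hA.apply i j
  have hCH : Cᴴ = -C := by
    rw [hCdef, conjTranspose_smul, hB_symm, Complex.star_def, Complex.conj_I, neg_smul]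
  have hCdetUnit : IsUnit C.det := by
    have hdB : B.det = ((A.det : ℝ) : ℂ) := (RingHom.map_det Complex.ofRealHom A).symm
    rw [hCdef, Matrix.det_smul, hdB]
    refine isUnit_iff_ne_zero.mpr (mul_ne_zero (pow_ne_zero _ Complex.I_ne_zero) ?_)
    exact_mod_cast hdet
  -- the conjugating involution
  set S' : Matrix (Fin n) (Fin n) ℂ := S.map (fun x : ℝ => (x : ℂ)) with hS'def
  have hS'diag : S' = Matrix.diagonal (fun i => ((d i : ℝ) : ℂ)) := by
    rw [hS'def, hS]
    exact Matrix.diagonal_map (by simp)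
  have hd2 : ∀ i, ((d i : ℝ) : ℂ) * ((d i : ℝ) : ℂ) = 1 := by
    intro i
    rcases hd i with h | h <;> simp [h]
  have hS'S' : S' * S' = 1 := by
    have hfun : (fun i => ((d i : ℝ) : ℂ) * ((d i : ℝ) : ℂ)) = fun _ => (1 : ℂ) :=
      funext hd2
    rw [hS'diag, Matrix.diagonal_mul_diagonal, hfun, Matrix.diagonal_one]
  have hmapmul : ∀ M N : Matrix (Fin n) (Fin n) ℝ,
      (M * N).map (fun x : ℝ => (x : ℂ)) =
        M.map (fun x : ℝ => (x : ℂ)) * N.map (fun x : ℝ => (x : ℂ)) := by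
    intro M N
    exact Matrix.map_mul (f := Complex.ofRealHom)
  have hSBS : S' * B * S' = -B := by
    have := congrArg (fun M : Matrix (Fin n) (Fin n) ℝ => M.map (fun x : ℝ => (x : ℂ))) hbip
    simp only [hmapmul] at this
    rw [hS'def, hBdef]
    rw [this]
    ext i j
    simp [Matrix.map_apply]
  have hSCS : S' * C * S' = -C := by
    rw [hCdef, Matrix.mul_smul, Matrix.smul_mul, hSBS, smul_neg]
  -- realness of the diagonal entry
  have hreal : ∀ t : ℝ, (starRingEnd ℂ) (f t) = f t := by
    intro t
    have h1 : ((t : ℂ) • C)ᴴ = S' * ((t : ℂ) • C) * S' := by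
      rw [conjTranspose_smul, hCH, Matrix.mul_smul, Matrix.smul_mul, hSCS,
        Complex.star_def, Complex.conj_ofReal]
    have h2 : (starRingEnd ℂ) (f t)
        = (NormedSpace.exp ((t : ℂ) • C))ᴴ u u := by
      rw [conjTranspose_apply]; rfl
    rw [h2, ← Matrix.exp_conjTranspose, h1, exp_conj_invol S' hS'S',
      hS'diag, Matrix.mul_diagonal, Matrix.diagonal_mul, hfdef]
    rw [mul_comm ((d u : ℂ)) _, mul_assoc, hd2 u, mul_one]
  set φ : ℝ → ℝ := fun t => (f t).re with hφdef
  have hfφ : ∀ t, f t = ((φ t : ℝ) : ℂ) := fun t =>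
    (Complex.conj_eq_iff_re.mp (hreal t)).symm
  have hfabs : ∀ t, ‖f t‖ = |φ t| := by
    intro t; rw [hfφ t, Complex.norm_real, Real.norm_eq_abs]
  -- continuity
  have hf_hasDeriv : ∀ t : ℝ,
      HasDerivAt f (((NormedSpace.exp ((t : ℂ) • C)) * C) u u) t := by
    intro t
    have h := (entry_mul_exp_hasDerivAt C 1 u u (t : ℂ)).comp_ofReal
    convert h using 1 <;> simp [hfdef]
  have hf_cont : Continuous f :=
    continuous_iff_continuousAt.mpr fun t => (hf_hasDeriv t).continuousAt
  have hφ_cont : Continuous φ := Complex.continuous_re.comp hf_cont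
  have hf0 : f 0 = 1 := by
    simp [hfdef, NormedSpace.exp_zero, Matrix.one_apply_eq]
  have hφ0 : φ 0 = 1 := by rw [hφdef]; simp [hf0]
  -- unitarity bound on the entries
  have habs : ∀ (t : ℝ) (v w : Fin n),
      ‖(NormedSpace.exp ((t : ℂ) • C)) v w‖ ≤ 1 := by
    intro t v w
    set U := NormedSpace.exp ((t : ℂ) • C) with hUdef
    have hUH : Uᴴ = NormedSpace.exp (-((t : ℂ) • C)) := by
      rw [hUdef, ← Matrix.exp_conjTranspose, conjTranspose_smul, hCH,
        Complex.star_def, Complex.conj_ofReal, smul_neg]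
    have hUU : U * Uᴴ = 1 := by rw [hUH, hUdef]; exact exp_mul_exp_neg _
    have hentry := (Matrix.ext_iff.2 hUU) v v
    rw [Matrix.mul_apply, Matrix.one_apply_eq] at hentry
    have h1 : ∑ w', (Complex.normSq (U v w') : ℂ) = 1 := by
      rw [← hentry]
      refine Finset.sum_congr rfl fun w' _ => ?_
      rw [conjTranspose_apply, Complex.star_def, Complex.mul_conj]
    have h2 : ∑ w', Complex.normSq (U v w') = 1 := by
      exact_mod_cast h1
    have h3 : Complex.normSq (U v w) ≤ 1 := by
      rw [← h2]
      exact Finset.single_le_sum (fun i _ => Complex.normSq_nonneg _) (Finset.mem_univ w)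
    have h4 : (‖U v w‖) ^ 2 ≤ 1 := by rw [Complex.sq_norm]; exact h3
    nlinarith [norm_nonneg (U v w)]
  -- the antiderivative
  set F : ℝ → ℂ := fun t => (C⁻¹ * NormedSpace.exp ((t : ℂ) • C)) u u with hFdef
  have hF_deriv : ∀ t : ℝ, HasDerivAt F (f t) t := by
    intro t
    have h := (entry_mul_exp_hasDerivAt C C⁻¹ u u (t : ℂ)).comp_ofReal
    have heq : (C⁻¹ * (NormedSpace.exp ((t : ℂ) • C) * C)) u u = f t := by
      rw [exp_mul_comm, ← Matrix.mul_assoc, Matrix.nonsing_inv_mul C hCdetUnit,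
        Matrix.one_mul]
    rwa [heq] at h
  set K : ℝ := ∑ v, ‖C⁻¹ u v‖ with hKdef
  have hKbound : ∀ t : ℝ, ‖F t‖ ≤ K := by
    intro t
    rw [hFdef]
    simp only [Matrix.mul_apply]
    refine le_trans (norm_sum_le _ _) ?_
    refine Finset.sum_le_sum fun v _ => ?_
    rw [norm_mul]
    exact mul_le_of_le_one_right (norm_nonneg _) (habs t v u)
  -- the contradiction argument
  by_contra hne
  have hnonneg : 0 ≤ ⨅ t : {t : ℝ // 0 < t}, ‖transition A t u u‖ :=
    le_ciInf fun t => norm_nonneg _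
  set c : ℝ := ⨅ t : {t : ℝ // 0 < t}, ‖transition A t u u‖ with hcdef
  have hcpos : 0 < c := lt_of_le_of_ne hnonneg (Ne.symm hne)
  have hlb : ∀ t : ℝ, 0 < t → c ≤ |φ t| := by
    intro t ht
    have hb : BddBelow (Set.range fun t : {t : ℝ // 0 < t} =>
        ‖transition A t u u‖) := by
      refine ⟨0, ?_⟩
      rintro x ⟨s, rfl⟩
      exact norm_nonneg _
    have h1 := ciInf_le hb (⟨t, ht⟩ : {t : ℝ // 0 < t})
    rw [htrans] at h1
    have h2 : c ≤ ‖f t‖ := h1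
    rwa [hfabs t] at h2
  have hφpos : ∀ t : ℝ, 0 < t → c ≤ φ t := by
    intro t ht
    by_contra hle
    push_neg at hle
    have hneg : φ t ≤ -c := by
      have := hlb t ht
      rcases abs_cases (φ t) with ⟨h1, _⟩ | ⟨h1, _⟩
      · linarith
      · linarith
    have hsub : Set.Icc (φ t) (φ 0) ⊆ φ '' Set.Icc 0 t :=
      intermediate_value_Icc' ht.le hφ_cont.continuousOn
    have h0mem : (0 : ℝ) ∈ Set.Icc (φ t) (φ 0) := by
      constructor
      · linarith
      · rw [hφ0]; norm_num
    obtain ⟨s, hs, hφs⟩ := hsub h0mem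
    rcases eq_or_lt_of_le hs.1 with h | h
    · rw [← h] at hφs; rw [hφ0] at hφs; norm_num at hφs
    · have := hlb s h
      rw [hφs] at this
      simp at this
      linarith
  -- integrate
  set c' : ℝ := min c 1 with hc'def
  have hc'pos : 0 < c' := lt_min hcpos one_pos
  set T : ℝ := (2 * K + 1) / c' with hTdef
  have hKnn : 0 ≤ K := Finset.sum_nonneg fun v _ => norm_nonneg _
  have hTpos : 0 < T := div_pos (by linarith) hc'pos
  have hmono : ∀ x ∈ Set.Icc (0 : ℝ) T, c' ≤ φ x := by
    intro x hx
    rcases eq_or_lt_of_le hx.1 with h | h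
    · rw [← h, hφ0]; exact min_le_right _ _
    · exact le_trans (min_le_left _ _) (hφpos x h)
  have hφint : IntervalIntegrable φ MeasureTheory.volume 0 T :=
    hφ_cont.intervalIntegrable 0 T
  have hlow : (T - 0) * c' ≤ ∫ t in (0 : ℝ)..T, φ t := by
    have := intervalIntegral.integral_mono_on hTpos.le
      (intervalIntegrable_const (c := c')) hφint hmono
    rwa [intervalIntegral.integral_const, smul_eq_mul] at this
  have hFTC : ∫ t in (0 : ℝ)..T, f t = F T - F 0 :=
    intervalIntegral.integral_eq_sub_of_hasDerivAt
      (fun t _ => hF_deriv t) (hf_cont.intervalIntegrable 0 T)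
  have hcast : ∫ t in (0 : ℝ)..T, f t = (((∫ t in (0 : ℝ)..T, φ t) : ℝ) : ℂ) := by
    rw [← intervalIntegral.integral_ofReal]
    exact intervalIntegral.integral_congr fun t _ => hfφ t
  have hup : |∫ t in (0 : ℝ)..T, φ t| ≤ 2 * K := by
    have h1 : ‖F T - F 0‖ ≤ 2 * K := by
      have htri : ‖F T - F 0‖ ≤ ‖F T‖ + ‖F 0‖ := by
        have h := norm_add_le (F T) (-(F 0))
        rwa [← sub_eq_add_neg, norm_neg] at h
      have := add_le_add (hKbound T) (hKbound 0)
      linarith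
    rw [← Real.norm_eq_abs, ← Complex.norm_real, ← hcast, hFTC]
    exact h1
  have hTc' : T * c' = 2 * K + 1 := by
    rw [hTdef]; field_simp
  have : (2 : ℝ) * K + 1 ≤ 2 * K := by
    calc (2 : ℝ) * K + 1 = T * c' := hTc'.symm
      _ = (T - 0) * c' := by ring
      _ ≤ ∫ t in (0 : ℝ)..T, φ t := hlow
      _ ≤ |∫ t in (0 : ℝ)..T, φ t| := le_abs_self _
      _ ≤ 2 * K := hup
  linarith
end

section
/- Let B be an n×n real matrix such that there is exactly one permutation σ of {1,…,n} with B_{i,σ(i)} ≠ 0 for every i (the bipartite weighted graph with biadjacency matrix B has a unique perfect matching), and let A = [[0, B],[Bᵀ, 0]] be the associated 2n×2n adjacency matrix. Then no vertex is sedentary: for every index u of A, inf_{t>0} |exp(itA)_{u,u}| = 0. -/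
open Matrix
open scoped Kronecker

open NormedSpace in
private lemma transition_eq' {m : Type*} [Fintype m] [DecidableEq m] (A : Matrix m m ℝ)
    (t : ℝ) :
    transition A t = exp (t • (Complex.I • A.map (fun x : ℝ => (x : ℂ)))) := by
  rw [transition, mul_comm, ← Complex.real_smul, smul_assoc]

open NormedSpace in
private lemma trans_im_zero {n : ℕ} (B : Matrix (Fin n) (Fin n) ℝ) (u : Fin n ⊕ Fin n)
    (t : ℝ) :
    (transition (Matrix.fromBlocks (0 : Matrix (Fin n) (Fin n) ℝ) B Bᵀ 0) t u u).im = 0 := by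
  set A : Matrix (Fin n ⊕ Fin n) (Fin n ⊕ Fin n) ℝ :=
    Matrix.fromBlocks (0 : Matrix (Fin n) (Fin n) ℝ) B Bᵀ 0 with hA
  set Ac : Matrix (Fin n ⊕ Fin n) (Fin n ⊕ Fin n) ℂ := A.map (fun x : ℝ => (x : ℂ)) with hAc
  set M : Matrix (Fin n ⊕ Fin n) (Fin n ⊕ Fin n) ℂ := (Complex.I * t) • Ac with hM
  have htrans : transition A t u u = exp M u u := rfl
  have hsymm : Aᵀ = A := by
    rw [hA, Matrix.fromBlocks_transpose]
    simp
  have hAcH : star Ac = Ac := by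
    ext i j
    have h1 : A j i = A i j := by
      have h2 := congrFun (congrFun hsymm i) j
      rw [Matrix.transpose_apply] at h2
      exact h2
    simp [hAc, Matrix.conjTranspose_apply, Matrix.map_apply, h1]
  have hstarM : star M = -M := by
    rw [hM, star_smul, hAcH, ← neg_smul]
    congr 1
    simp [Complex.star_def]
  set d : Fin n ⊕ Fin n → ℂ := Sum.elim (fun _ => 1) (fun _ => -1) with hd
  set D : Matrix (Fin n ⊕ Fin n) (Fin n ⊕ Fin n) ℂ := Matrix.diagonal d with hD
  have hDD : D * D = 1 := by
    have hdd : (fun i => d i * d i) = fun _ => (1 : ℂ) := by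
      funext i
      rcases i with i | i <;> simp [hd]
    rw [hD, Matrix.diagonal_mul_diagonal, hdd, Matrix.diagonal_one]
  have hDAD : D * Ac * D = -Ac := by
    ext i j
    rcases i with i | i <;> rcases j with j | j <;>
      simp [hD, hAc, hA, Matrix.mul_diagonal, Matrix.diagonal_mul, hd, Matrix.map_apply]
  have hDMD : D * M * D = -M := by
    rw [hM, Matrix.mul_smul, Matrix.smul_mul, hDAD, smul_neg]
  let Du : (Matrix (Fin n ⊕ Fin n) (Fin n ⊕ Fin n) ℂ)ˣ := ⟨D, D, hDD, hDD⟩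
  have hexp : exp (-M) = D * exp M * D := by
    have h5 := Matrix.exp_units_conj Du M
    rw [show ((Du : (Matrix (Fin n ⊕ Fin n) (Fin n ⊕ Fin n) ℂ)ˣ) : Matrix _ _ ℂ) = D from rfl,
      show ((Du⁻¹ : (Matrix (Fin n ⊕ Fin n) (Fin n ⊕ Fin n) ℂ)ˣ) : Matrix _ _ ℂ) = D from rfl,
      hDMD] at h5
    exact h5
  have hstar : star (exp M) = D * exp M * D := by
    rw [star_exp, hstarM, hexp]
  have h1 : star (exp M) u u = (D * exp M * D) u u := by rw [hstar]
  have h2 : star (exp M) u u = (starRingEnd ℂ) (exp M u u) := rfl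
  have h3 : (D * exp M * D) u u = d u * exp M u u * d u := by
    rw [hD, Matrix.mul_diagonal, Matrix.diagonal_mul]
  have h4 : d u * exp M u u * d u = exp M u u := by
    rcases u with i | i <;> simp [hd]
  rw [htrans, ← Complex.conj_eq_iff_im]
  rw [← h2, h1, h3, h4]

/-- A unique permutation with all nonzero entries forces a nonzero determinant. -/
private lemma det_ne_zero_of_unique {n : ℕ} (B : Matrix (Fin n) (Fin n) ℝ)
    (huniq : ∃! σ : Equiv.Perm (Fin n), ∀ i : Fin n, B i (σ i) ≠ 0) : B.det ≠ 0 := by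
  obtain ⟨σ₀, hσ₀, huniq'⟩ := huniq
  have hprod : ∏ i, B (σ₀⁻¹ i) i ≠ 0 :=
    Finset.prod_ne_zero_iff.2 fun i _ => by
      have h1 := hσ₀ (σ₀⁻¹ i)
      rwa [← Equiv.Perm.mul_apply, mul_inv_cancel, Equiv.Perm.one_apply] at h1
  have hzero : ∀ σ ∈ Finset.univ, σ ≠ σ₀⁻¹ →
      Equiv.Perm.sign σ • ∏ i, B (σ i) i = 0 := by
    intro σ _ hσ
    have h1 : ¬ ∀ i, B i (σ⁻¹ i) ≠ 0 := by
      intro h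
      exact hσ (by rw [← huniq' σ⁻¹ h, inv_inv])
    push_neg at h1
    obtain ⟨i, hi⟩ := h1
    have h2 : B (σ (σ⁻¹ i)) (σ⁻¹ i) = 0 := by rwa [← Equiv.Perm.mul_apply, mul_inv_cancel, Equiv.Perm.one_apply]
    have h3 : ∏ j, B (σ j) j = 0 := Finset.prod_eq_zero (Finset.mem_univ (σ⁻¹ i)) h2
    rw [h3, smul_zero]
  rw [Matrix.det_apply, Finset.sum_eq_single_of_mem σ₀⁻¹ (Finset.mem_univ _) hzero]
  intro h
  rcases Int.units_eq_one_or (Equiv.Perm.sign σ₀⁻¹) with hs | hs <;> rw [hs] at h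
  · rw [one_smul] at h; exact hprod h
  · rw [Units.neg_smul, one_smul, neg_eq_zero] at h; exact hprod h

attribute [local instance] Matrix.linftyOpNormedAddCommGroup Matrix.linftyOpNormedRing
  Matrix.linftyOpNormedAlgebra

open NormedSpace in
private lemma key_aux {m : Type*} [Fintype m] [DecidableEq m] (A : Matrix m m ℝ)
    (hsymm : Aᵀ = A) (C : Matrix m m ℂ)
    (hC : A.map (fun x : ℝ => (x : ℂ)) * C = 1) (u : m)
    (hreal : ∀ t : ℝ, (transition A t u u).im = 0) :
    (⨅ t : {t : ℝ // 0 < t}, ‖transition A t u u‖) = 0 := by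
  classical
  set Ac : Matrix m m ℂ := A.map (fun x : ℝ => (x : ℂ)) with hAc
  set N : Matrix m m ℂ := Complex.I • Ac with hN
  set Ninv : Matrix m m ℂ := (-Complex.I) • C with hNinv
  have hNNinv : N * Ninv = 1 := by
    rw [hN, hNinv, Matrix.smul_mul, Matrix.mul_smul, hC, smul_smul]
    norm_num [Complex.I_mul_I]
  -- the entry function
  have hft : ∀ t : ℝ, transition A t u u = exp (t • N) u u := by
    intro t
    rw [transition_eq' A t]
  -- Hermitian-ness
  have hAcH : star Ac = Ac := by
    ext i j
    have h1 : A j i = A i j := by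
      have h2 := congrFun (congrFun hsymm i) j
      rw [Matrix.transpose_apply] at h2
      exact h2
    simp [hAc, Matrix.conjTranspose_apply, Matrix.map_apply, h1]
  have hstarN : ∀ t : ℝ, star (t • N) = -(t • N) := by
    intro t
    rw [star_smul, star_trivial, hN, star_smul, hAcH, Complex.star_def, Complex.conj_I,
      neg_smul, smul_neg]
  -- unitarity
  have hU : ∀ t : ℝ, exp (t • N) * star (exp (t • N)) = 1 := by
    intro t
    rw [star_exp, hstarN,
      ← Matrix.exp_add_of_commute (t • N) (-(t • N)) ((Commute.refl (t • N)).neg_right),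
      add_neg_cancel, exp_zero]
  have habs : ∀ (t : ℝ) (v : m), ‖exp (t • N) u v‖ ≤ 1 := by
    intro t v
    have h1 : (exp (t • N) * star (exp (t • N))) u u = (1 : Matrix m m ℂ) u u := by
      rw [hU t]
    rw [Matrix.mul_apply, Matrix.one_apply_eq] at h1
    have h2 : ∀ w, star (exp (t • N)) w u = starRingEnd ℂ (exp (t • N) u w) := by
      intro w; rfl
    simp only [h2, Complex.mul_conj] at h1
    have h3 : ∑ w, Complex.normSq (exp (t • N) u w) = 1 := by
      exact_mod_cast h1
    have h4 : Complex.normSq (exp (t • N) u v) ≤ 1 := by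
      rw [← h3]
      exact Finset.single_le_sum (fun w _ => Complex.normSq_nonneg _) (Finset.mem_univ v)
    rw [Complex.norm_def]
    calc Real.sqrt (Complex.normSq (exp (t • N) u v)) ≤ Real.sqrt 1 := Real.sqrt_le_sqrt h4
    _ = 1 := Real.sqrt_one
  -- the linear functional X ↦ (X * Ninv) u u
  let L0 : Matrix m m ℂ →ₗ[ℝ] ℂ :=
    { toFun := fun X => (X * Ninv) u u
      map_add' := fun X Y => by simp [Matrix.add_mul]
      map_smul' := fun c X => by simp [Matrix.smul_mul] }
  let L : Matrix m m ℂ →L[ℝ] ℂ := L0.toContinuousLinearMap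
  have hLapp : ∀ X : Matrix m m ℂ, L X = (X * Ninv) u u := fun X => rfl
  -- derivative of the matrix exponential
  have hd : ∀ t : ℝ, HasDerivAt (fun s : ℝ => exp (s • N)) (exp (t • N) * N) t := by
    intro t
    exact hasDerivAt_exp_smul_const N t
  -- antiderivative of the diagonal entry
  have hh : ∀ t : ℝ, HasDerivAt (fun s : ℝ => L (exp (s • N))) (exp (t • N) u u) t := by
    intro t
    have h2 := L.hasFDerivAt.comp_hasDerivAt t (hd t)
    have h3 : L (exp (t • N) * N) = exp (t • N) u u := by
      rw [hLapp, mul_assoc, hNNinv, mul_one]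
    have h4 : HasDerivAt (fun s : ℝ => L (exp (s • N))) (L (exp (t • N) * N)) t := h2
    rw [h3] at h4
    exact h4
  -- continuity
  have hexpc : Continuous fun t : ℝ => exp (t • N) :=
    continuous_iff_continuousAt.2 fun t => (hd t).continuousAt
  let L2 : Matrix m m ℂ →ₗ[ℝ] ℂ :=
    { toFun := fun X => X u u
      map_add' := fun X Y => rfl
      map_smul' := fun c X => rfl }
  have hfc : Continuous fun t : ℝ => exp (t • N) u u :=
    L2.toContinuousLinearMap.continuous.comp hexpc
  set g : ℝ → ℝ := fun t => (exp (t • N) u u).re with hg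
  have hgc : Continuous g := Complex.continuous_re.comp hfc
  have hgval : ∀ t : ℝ, (exp (t • N) u u) = ((g t : ℝ) : ℂ) := by
    intro t
    have him : (exp (t • N) u u).im = 0 := by rw [← hft t]; exact hreal t
    exact Complex.ext rfl (by simp [him])
  have hgabs : ∀ t : ℝ, ‖exp (t • N) u u‖ = |g t| := by
    intro t; rw [hgval t, Complex.norm_real, Real.norm_eq_abs]
  have hg0 : g 0 = 1 := by
    have : ((0 : ℝ) • N) = 0 := by rw [zero_smul]
    simp [hg, this, Matrix.one_apply_eq]
  -- bound on the antiderivative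
  set Cb : ℝ := ∑ v, ‖Ninv v u‖ with hCb
  have hCb0 : 0 ≤ Cb := Finset.sum_nonneg fun v _ => norm_nonneg _
  have hbound : ∀ t : ℝ, |(L (exp (t • N))).re| ≤ Cb := by
    intro t
    refine le_trans (Complex.abs_re_le_norm _) ?_
    rw [hLapp, Matrix.mul_apply]
    refine le_trans (norm_sum_le _ _) ?_
    rw [hCb]
    refine Finset.sum_le_sum fun v _ => ?_
    rw [norm_mul]
    calc ‖exp (t • N) u v‖ * ‖Ninv v u‖
        ≤ 1 * ‖Ninv v u‖ :=
          mul_le_mul_of_nonneg_right (habs t v) (norm_nonneg _)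
      _ = ‖Ninv v u‖ := one_mul _
  -- now the main contradiction argument
  by_contra hne
  have hnonneg : (0:ℝ) ≤ ⨅ t : {t : ℝ // 0 < t}, ‖transition A t u u‖ := by
    haveI : Nonempty {t : ℝ // 0 < t} := ⟨⟨1, one_pos⟩⟩
    exact le_ciInf fun t => norm_nonneg _
  set c : ℝ := ⨅ t : {t : ℝ // 0 < t}, ‖transition A t u u‖ with hc
  have hcpos : 0 < c := lt_of_le_of_ne hnonneg (Ne.symm hne)
  have hbdd : BddBelow (Set.range fun t : {t : ℝ // 0 < t} =>
      ‖transition A t u u‖) := by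
    refine ⟨0, ?_⟩
    rintro x ⟨t, rfl⟩
    exact norm_nonneg _
  have hle : ∀ t : ℝ, 0 < t → c ≤ |g t| := by
    intro t ht
    have := ciInf_le hbdd (⟨t, ht⟩ : {t : ℝ // 0 < t})
    rwa [hft, hgabs] at this
  have hc1 : c ≤ 1 := by
    refine le_trans (le_trans (hle 1 one_pos) ?_) (le_refl 1)
    rw [← hgabs]
    exact habs 1 u
  -- g stays at least c on [0, ∞)
  have hge : ∀ t : ℝ, 0 ≤ t → c ≤ g t := by
    intro t ht
    rcases eq_or_lt_of_le ht with rfl | ht'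
    · rw [hg0]; exact hc1
    by_contra hlt
    push_neg at hlt
    have habs' : c ≤ |g t| := hle t ht'
    have hneg : g t ≤ -c := by
      rcases abs_cases (g t) with ⟨h1, h2⟩ | ⟨h1, h2⟩ <;> linarith
    have hmem : (0:ℝ) ∈ Set.Icc (g t) (g 0) := by
      constructor
      · linarith
      · rw [hg0]; norm_num
    obtain ⟨s, hs, hgs⟩ := intermediate_value_Icc' (le_of_lt ht') hgc.continuousOn hmem
    have hs0 : s ≠ 0 := by
      rintro rfl
      rw [hg0] at hgs
      norm_num at hgs
    have := hle s (lt_of_le_of_ne hs.1 (Ne.symm hs0))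
    rw [hgs] at this
    simp at this
    linarith
  -- integrate
  set T : ℝ := (2 * Cb + 2) / c with hT
  have hTpos : 0 < T := div_pos (by linarith) hcpos
  have hInt : (∫ t in (0:ℝ)..T, g t) =
      (L (exp (T • N))).re - (L (exp ((0:ℝ) • N))).re := by
    refine intervalIntegral.integral_eq_sub_of_hasDerivAt
      (f := fun s : ℝ => (L (exp (s • N))).re) (fun s _ => ?_)
      (hgc.intervalIntegrable 0 T)
    exact Complex.reCLM.hasFDerivAt.comp_hasDerivAt s (hh s)
  have hlow : c * T ≤ ∫ t in (0:ℝ)..T, g t := by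
    have h5 : (∫ _ in (0:ℝ)..T, c) ≤ ∫ t in (0:ℝ)..T, g t := by
      refine intervalIntegral.integral_mono_on (le_of_lt hTpos)
        intervalIntegrable_const (hgc.intervalIntegrable 0 T) fun s hs => hge s hs.1
    simpa [mul_comm] using h5
  have hup : (∫ t in (0:ℝ)..T, g t) ≤ 2 * Cb := by
    rw [hInt]
    have h6 := hbound T
    have h7 := hbound 0
    have h8 := abs_le.1 h6
    have h9 := abs_le.1 h7
    linarith
  have hcT : c * T = 2 * Cb + 2 := by
    rw [hT, mul_div_cancel₀ _ (ne_of_gt hcpos)]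
  linarith

/-- if the bipartite weighted graph with biadjacency matrix `B` has a unique
perfect matching, then no vertex of the bipartite graph with adjacency matrix
`A = [[0, B],[Bᵀ, 0]]` is sedentary. -/
theorem stmt8 {n : ℕ} (B : Matrix (Fin n) (Fin n) ℝ)
    (huniq : ∃! σ : Equiv.Perm (Fin n), ∀ i : Fin n, B i (σ i) ≠ 0) :
    ∀ u : Fin n ⊕ Fin n,
      (⨅ t : {t : ℝ // 0 < t},
        ‖transition
          (Matrix.fromBlocks (0 : Matrix (Fin n) (Fin n) ℝ) B Bᵀ
            (0 : Matrix (Fin n) (Fin n) ℝ)) t u u‖) = 0 := by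
  intro u
  have hdet := det_ne_zero_of_unique B huniq
  haveI : Invertible B := B.invertibleOfIsUnitDet (isUnit_iff_ne_zero.mpr hdet)
  haveI : Invertible Bᵀ := Bᵀ.invertibleOfIsUnitDet
    (by rw [Matrix.det_transpose]; exact isUnit_iff_ne_zero.mpr hdet)
  set A : Matrix (Fin n ⊕ Fin n) (Fin n ⊕ Fin n) ℝ :=
    Matrix.fromBlocks (0 : Matrix (Fin n) (Fin n) ℝ) B Bᵀ 0 with hA
  set Cr : Matrix (Fin n ⊕ Fin n) (Fin n ⊕ Fin n) ℝ :=
    Matrix.fromBlocks 0 (⅟(Bᵀ)) (⅟B) 0 with hCr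
  have hACr : A * Cr = 1 := by
    rw [hA, hCr, Matrix.fromBlocks_multiply]
    simp [← Matrix.fromBlocks_one]
  have hsymm : Aᵀ = A := by
    rw [hA, Matrix.fromBlocks_transpose]
    simp
  have hC : A.map (fun x : ℝ => (x : ℂ)) * Cr.map (fun x : ℝ => (x : ℂ)) = 1 := by
    have h1 : (A * Cr).map (fun x : ℝ => (x : ℂ)) =
        A.map (fun x : ℝ => (x : ℂ)) * Cr.map (fun x : ℝ => (x : ℂ)) :=
      Matrix.map_mul (f := Complex.ofRealHom)
    rw [← h1, hACr]
    exact Matrix.map_one _ (by simp) (by simp)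
  exact key_aux A hsymm (Cr.map (fun x : ℝ => (x : ℂ))) hC u (fun t => trans_im_zero B u t)
end

section
/- Let n ≥ 3 be odd and let α be a nonzero real number with |α| > √((n−1)/2). Let A be the n×n real symmetric matrix of the weighted path on vertices 1,…,n defined by A_{1,2} = A_{2,1} = 1/α, A_{j,j+1} = A_{j+1,j} = 1 for 2 ≤ j ≤ n−1, and all other entries 0. Then the end vertex 1 is sedentary: inf_{t>0} |exp(itA)_{1,1}| > 0 (indeed |exp(itA)_{1,1}| ≥ 2·α²/(α² + (n−1)/2) − 1 > 0 for all real t). -/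
open Matrix
open scoped Kronecker

lemma exp_mul_right_zero {m : Type*} [Fintype m] [DecidableEq m]
    (M P : Matrix m m ℂ) (h : M * P = 0) :
    NormedSpace.exp M * P = P := by
  letI : SeminormedRing (Matrix m m ℂ) := Matrix.linftyOpSemiNormedRing
  letI : NormedRing (Matrix m m ℂ) := Matrix.linftyOpNormedRing
  letI : NormedAlgebra ℂ (Matrix m m ℂ) := Matrix.linftyOpNormedAlgebra
  rw [NormedSpace.exp_eq_tsum ℂ]
  beta_reduce
  erw [← (NormedSpace.expSeries_summable' (𝕂 := ℂ) M).tsum_mul_right]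
  rw [tsum_eq_single 0]
  · simp
  · intro k hk
    obtain ⟨k, rfl⟩ := Nat.exists_eq_succ_of_ne_zero hk
    rw [smul_mul_assoc, pow_succ, mul_assoc, h, mul_zero, smul_zero]

lemma exp_mul_left_zero {m : Type*} [Fintype m] [DecidableEq m]
    (M P : Matrix m m ℂ) (h : P * M = 0) :
    P * NormedSpace.exp M = P := by
  letI : SeminormedRing (Matrix m m ℂ) := Matrix.linftyOpSemiNormedRing
  letI : NormedRing (Matrix m m ℂ) := Matrix.linftyOpNormedRing
  letI : NormedAlgebra ℂ (Matrix m m ℂ) := Matrix.linftyOpNormedAlgebra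
  rw [NormedSpace.exp_eq_tsum ℂ]
  beta_reduce
  erw [← (NormedSpace.expSeries_summable' (𝕂 := ℂ) M).tsum_mul_left]
  rw [tsum_eq_single 0]
  · simp
  · intro k hk
    obtain ⟨k, rfl⟩ := Nat.exists_eq_succ_of_ne_zero hk
    rw [mul_smul_comm, pow_succ', ← mul_assoc, h, zero_mul, smul_zero]

lemma abstract_bound {m : Type*} [Fintype m] [DecidableEq m]
    (U P : Matrix m m ℂ) (hU : Uᴴ * U = 1) (hUP : U * P = P) (hPU : P * U = P)
    (hPP : P * P = P) (hQsym : ∀ i j, P i j = P j i)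
    (hreal : ∀ i j, (starRingEnd ℂ) (P i j) = P i j)
    (z : m) (p : ℝ) (hp : P z z = (p : ℂ)) (hp0 : 0 ≤ p) :
    2 * p - 1 ≤ ‖U z z‖ := by
  classical
  set w : m → ℂ := fun k => (1 - P) k z with hw
  have hwz : ∀ k, (1 - P) z k = w k := by
    intro k
    simp only [hw, Matrix.sub_apply, Matrix.one_apply, hQsym z k]
    by_cases h : z = k
    · subst h; simp
    · rw [if_neg h, if_neg (fun h' => h h'.symm)]
  have hstarw : ∀ k, (starRingEnd ℂ) (w k) = w k := by
    intro k
    simp only [hw, Matrix.sub_apply, Matrix.one_apply, map_sub, hreal]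
    congr 1
    split <;> simp
  -- decomposition U = P + (1-P) U (1-P)
  have hdecomp : U = P + (1 - P) * U * (1 - P) := by
    have e1 : (1 - P) * U = U - P := by rw [sub_mul, one_mul, hPU]
    have e2 : (U - P) * (1 - P) = U - P := by
      rw [mul_sub, mul_one, sub_mul, hUP, hPP]; abel
    rw [e1, e2]; abel
  set d : ℂ := w ⬝ᵥ U.mulVec w with hd
  have hBzz : ((1 - P) * U * (1 - P)) z z = d := by
    rw [hd, Matrix.mul_assoc]
    simp only [Matrix.mul_apply, Matrix.mulVec, dotProduct, hwz]
    rfl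
  have hUzz : U z z = (p : ℂ) + d := by
    conv_lhs => rw [hdecomp]
    rw [Matrix.add_apply, hBzz, hp]
  -- w ⬝ᵥ w = 1 - p
  have hQQ : (1 - P) * (1 - P) = 1 - P := by
    rw [sub_mul, one_mul, mul_sub, mul_one, hPP]; abel
  have hww : w ⬝ᵥ w = 1 - (p : ℂ) := by
    have : w ⬝ᵥ w = ((1 - P) * (1 - P)) z z := by
      rw [Matrix.mul_apply]
      congr 1; ext k
      rw [hwz k]
    rw [this, hQQ, Matrix.sub_apply, Matrix.one_apply_eq, hp]
  -- Cauchy-Schwarz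
  set x : EuclideanSpace ℂ m := (WithLp.equiv 2 (m → ℂ)).symm w with hx
  set y : EuclideanSpace ℂ m := (WithLp.equiv 2 (m → ℂ)).symm (U.mulVec w) with hy
  have hinner_xy : (inner ℂ x y : ℂ) = d := by
    rw [PiLp.inner_apply]
    simp only [hx, hy, WithLp.equiv_symm_apply, PiLp.toLp_apply, RCLike.inner_apply]
    rw [hd, dotProduct]
    congr 1; ext k
    rw [hstarw k, mul_comm]
  have hinner_xx : (inner ℂ x x : ℂ) = 1 - (p : ℂ) := by
    rw [PiLp.inner_apply]
    simp only [hx, WithLp.equiv_symm_apply, PiLp.toLp_apply, RCLike.inner_apply]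
    rw [← hww, dotProduct]
    congr 1; ext k
    rw [hstarw k]
  have hinner_yy : (inner ℂ y y : ℂ) = 1 - (p : ℂ) := by
    rw [PiLp.inner_apply]
    simp only [hy, WithLp.equiv_symm_apply, PiLp.toLp_apply, RCLike.inner_apply]
    have : ∑ i, (U.mulVec w i) * (starRingEnd ℂ) (U.mulVec w i)
        = star (U.mulVec w) ⬝ᵥ U.mulVec w := Finset.sum_congr rfl fun _ _ => mul_comm _ _
    rw [this, Matrix.star_mulVec, ← dotProduct_mulVec,
      Matrix.mulVec_mulVec, hU, Matrix.one_mulVec, ← hww, dotProduct]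
    congr 1; ext k
    rw [show star w k = (starRingEnd ℂ) (w k) from rfl, hstarw k]
  have hnx : ‖x‖ = Real.sqrt (1 - p) := by
    rw [@norm_eq_sqrt_re_inner ℂ, hinner_xx]
    norm_num
  have hny : ‖y‖ = Real.sqrt (1 - p) := by
    rw [@norm_eq_sqrt_re_inner ℂ, hinner_yy]
    norm_num
  have hp1 : 0 ≤ 1 - p := by
    have h0 : (0:ℝ) ≤ RCLike.re (inner ℂ x x : ℂ) := inner_self_nonneg
    rw [hinner_xx] at h0
    simpa using h0
  have hCS : ‖d‖ ≤ 1 - p := by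
    have := norm_inner_le_norm (𝕜 := ℂ) x y
    rw [hinner_xy, hnx, hny] at this
    calc ‖d‖ = ‖d‖ := rfl
      _ ≤ Real.sqrt (1-p) * Real.sqrt (1-p) := this
      _ = 1 - p := Real.mul_self_sqrt hp1
  have h1 : (p : ℝ) = ‖((p : ℂ))‖ := by
    rw [Complex.norm_real, Real.norm_eq_abs, abs_of_nonneg hp0]
  have h2 := norm_add_le ((p:ℂ) + d) (-d)
  rw [add_neg_cancel_right, norm_neg, ← hUzz] at h2
  linarith

lemma sum_aux (a : ℝ) (m : ℕ) :
    ∑ k ∈ Finset.range (2*m+1),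
      (if k % 2 = 1 then 0 else if k = 0 then a else 1 : ℝ) = a + m := by
  induction m with
  | zero => norm_num
  | succ m ih =>
    have h1 : 2*(m+1)+1 = (2*m+1) + 1 + 1 := by ring
    rw [h1, Finset.sum_range_succ, Finset.sum_range_succ, ih,
      if_pos (by omega : (2*m+1) % 2 = 1),
      if_neg (by omega : ¬ (2*m+1+1) % 2 = 1),
      if_neg (by omega : ¬ (2*m+1+1) = 0)]
    push_cast; ring

/-- for odd `n ≥ 3` and `|α| > √((n-1)/2)`, the weighted path on `n` vertices
whose first edge has weight `1/α` and all other edges weight `1` has a sedentary end vertex: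
`|exp(itA)_{1,1}| ≥ 2·α²/(α² + (n-1)/2) − 1 > 0` for all real `t`.
(Vertices `1,…,n` are indexed by `Fin n`, vertex `1` being index `0`.) -/
theorem stmt10 {n : ℕ} (hn : 3 ≤ n) (hodd : Odd n)
    (α : ℝ) (hα : α ≠ 0) (hbig : Real.sqrt (((n : ℝ) - 1) / 2) < |α|)
    (A : Matrix (Fin n) (Fin n) ℝ)
    (hA : ∀ i j : Fin n, A i j =
      if (i.val = 0 ∧ j.val = 1) ∨ (i.val = 1 ∧ j.val = 0) then 1 / α
      else if i.val + 1 = j.val ∨ j.val + 1 = i.val then 1 else 0) :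
    0 < 2 * (α ^ 2 / (α ^ 2 + ((n : ℝ) - 1) / 2)) - 1 ∧
    (∀ t : ℝ, 2 * (α ^ 2 / (α ^ 2 + ((n : ℝ) - 1) / 2)) - 1 ≤
      ‖transition A t ⟨0, by omega⟩ ⟨0, by omega⟩‖) ∧
    Sedentary A ⟨0, by omega⟩ := by
  obtain ⟨mh, hm⟩ : ∃ m, n = 2*m+1 := by
    obtain ⟨j, hj⟩ := hodd; exact ⟨j, by omega⟩
  -- basic real facts
  have hn1 : (1:ℝ) ≤ (n:ℝ) := by
    have : 1 ≤ n := by omega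
    exact_mod_cast this
  have h0 : (0:ℝ) ≤ ((n:ℝ)-1)/2 := by linarith
  have hhalf : ((n:ℝ) - 1)/2 < α^2 := by
    have h1 : Real.sqrt (((n:ℝ)-1)/2) ^ 2 < |α|^2 :=
      pow_lt_pow_left₀ hbig (Real.sqrt_nonneg _) (by norm_num)
    rwa [Real.sq_sqrt h0, sq_abs] at h1
  set N : ℝ := α ^ 2 + ((n : ℝ) - 1) / 2 with hNdef
  have hN : 0 < N := by positivity
  have hNne : (N:ℂ) ≠ 0 := by exact_mod_cast hN.ne'
  set p : ℝ := α ^ 2 / N with hpdef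
  have hp0 : 0 ≤ p := by positivity
  have hpos : 0 < 2 * p - 1 := by
    have : 1/2 < p := by rw [hpdef, lt_div_iff₀ hN]; rw [hNdef]; linarith
    linarith
  set z : Fin n := ⟨0, by omega⟩ with hz
  -- the 0-eigenvector
  set v : Fin n → ℝ := fun k =>
    if k.val % 2 = 1 then 0 else (-1:ℝ)^(k.val/2) * (if k.val = 0 then α else 1) with hv
  have hvz : v z = α := by simp [hv, hz]
  -- sum of squares
  have hsum : ∑ k : Fin n, v k * v k = N := by
    have hvv : ∀ k : Fin n, v k * v k =
        (if k.val % 2 = 1 then 0 else if k.val = 0 then α^2 else 1) := by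
      intro k
      by_cases h1 : k.val % 2 = 1
      · simp [hv, h1]
      · simp only [hv, if_neg h1]
        have hpow : ((-1:ℝ)^(k.val/2)) * ((-1:ℝ)^(k.val/2)) = 1 := by
          rw [← pow_add]; exact Even.neg_one_pow ⟨k.val/2, rfl⟩
        rw [mul_mul_mul_comm, hpow, one_mul]
        by_cases h0' : k.val = 0
        · rw [if_pos h0', if_pos h0', sq]
        · rw [if_neg h0', if_neg h0', mul_one]
    calc ∑ k : Fin n, v k * v k
        = ∑ k ∈ Finset.range n, (if k % 2 = 1 then 0 else if k = 0 then α^2 else 1 : ℝ) := by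
          rw [← Fin.sum_univ_eq_sum_range]
          exact Finset.sum_congr rfl (fun k _ => hvv k)
      _ = α^2 + mh := by rw [hm]; exact sum_aux (α^2) mh
      _ = N := by rw [hNdef, hm]; push_cast; ring
  -- eigenvector equation
  have hAv : A.mulVec v = 0 := by
    ext i
    simp only [Matrix.mulVec, dotProduct, Pi.zero_apply]
    by_cases hi : i.val % 2 = 1
    · -- odd i : two nonzero terms
      have hi1 : 1 ≤ i.val := by omega
      have hilt : i.val < n := i.isLt
      have hlt : i.val + 1 < n := by omega
      set ja : Fin n := ⟨i.val - 1, by omega⟩ with hja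
      set jb : Fin n := ⟨i.val + 1, hlt⟩ with hjb
      have hja_val : ja.val = i.val - 1 := rfl
      have hjb_val : jb.val = i.val + 1 := rfl
      have hne : ja ≠ jb := by
        rw [ne_eq, Fin.ext_iff, hja_val, hjb_val]; omega
      have hzero : ∀ j ∈ Finset.univ, j ∉ ({ja, jb} : Finset (Fin n)) →
          A i j * v j = 0 := by
        intro j _ hj
        rw [Finset.mem_insert, Finset.mem_singleton] at hj
        push_neg at hj
        obtain ⟨hj1, hj2⟩ := hj
        have hj1' : j.val ≠ i.val - 1 := fun h => hj1 (Fin.ext (by rw [h, hja_val]))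
        have hj2' : j.val ≠ i.val + 1 := fun h => hj2 (Fin.ext (by rw [h, hjb_val]))
        by_cases hjo : j.val % 2 = 1
        · have : v j = 0 := by simp [hv, hjo]
          rw [this, mul_zero]
        · rw [hA, if_neg (by omega), if_neg (by omega), zero_mul]
      have hpair : ∑ j : Fin n, A i j * v j = A i ja * v ja + A i jb * v jb := by
        rw [← Finset.sum_subset (Finset.subset_univ ({ja, jb} : Finset (Fin n))) hzero,
          Finset.sum_pair hne]
      rw [hpair]
      have hvja : v ja = (-1:ℝ)^((i.val-1)/2) * (if i.val - 1 = 0 then α else 1) := by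
        simp only [hv, hja_val]
        rw [if_neg (by omega)]
      have hvjb : v jb = (-1:ℝ)^((i.val+1)/2) := by
        simp only [hv, hjb_val]
        rw [if_neg (by omega), if_neg (by omega), mul_one]
      have hAjb : A i jb = 1 := by
        rw [hA, hjb_val]  -- may not be needed
        rw [if_neg (by omega), if_pos (by omega)]
      by_cases hi2 : i.val = 1
      · have hAja : A i ja = 1/α := by
          rw [hA]; rw [if_pos (by rw [hja_val]; omega)]
        rw [hAja, hAjb, hvja, hvjb, hi2]
        norm_num
        field_simp
        norm_num
      · have hi3 : 3 ≤ i.val := by omega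
        have hAja : A i ja = 1 := by
          rw [hA]; rw [if_neg (by rw [hja_val]; omega), if_pos (by rw [hja_val]; omega)]
        have hdiv : (i.val+1)/2 = (i.val-1)/2 + 1 := by omega
        rw [hAja, hAjb, hvja, hvjb, if_neg (by omega), hdiv, pow_succ]
        ring
    · -- even i : all terms vanish
      apply Finset.sum_eq_zero
      intro j _
      by_cases hjo : j.val % 2 = 1
      · have : v j = 0 := by simp [hv, hjo]
        rw [this, mul_zero]
      · rw [hA, if_neg (by omega), if_neg (by omega), zero_mul]
  -- complex versions
  set c : ℝ → ℂ := fun x => (x : ℂ) with hc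
  set A' : Matrix (Fin n) (Fin n) ℂ := A.map c with hA'
  set v' : Fin n → ℂ := fun k => ((v k : ℝ) : ℂ) with hv'
  have hsymA : ∀ i j : Fin n, A i j = A j i := by
    intro i j
    rw [hA i j, hA j i]
    split_ifs <;> first | rfl | omega
  have hA'v : ∀ i, ∑ j, (A i j : ℂ) * v' j = 0 := by
    intro i
    have h := congrFun hAv i
    simp only [Matrix.mulVec, dotProduct, Pi.zero_apply] at h
    calc ∑ j, (A i j : ℂ) * v' j = ((∑ j, A i j * v j : ℝ) : ℂ) := by
          push_cast; rfl
      _ = 0 := by rw [h]; simp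
  have hsum' : ∑ k, v' k * v' k = (N:ℂ) := by
    calc ∑ k, v' k * v' k = ((∑ k, v k * v k : ℝ) : ℂ) := by push_cast; rfl
      _ = (N:ℂ) := by rw [hsum]
  set P : Matrix (Fin n) (Fin n) ℂ := ((N:ℂ))⁻¹ • Matrix.vecMulVec v' v' with hP
  have hAX : A' * Matrix.vecMulVec v' v' = 0 := by
    ext i j
    rw [Matrix.mul_apply, Matrix.zero_apply]
    simp only [Matrix.vecMulVec_apply, hA', Matrix.map_apply, hc]
    calc ∑ k, (A i k : ℂ) * (v' k * v' j) = (∑ k, (A i k : ℂ) * v' k) * v' j := by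
          rw [Finset.sum_mul]
          exact Finset.sum_congr rfl fun k _ => by ring
      _ = 0 := by rw [hA'v i, zero_mul]
  have hXA : Matrix.vecMulVec v' v' * A' = 0 := by
    ext i j
    rw [Matrix.mul_apply, Matrix.zero_apply]
    simp only [Matrix.vecMulVec_apply, hA', Matrix.map_apply, hc]
    calc ∑ k, (v' i * v' k) * (A k j : ℂ) = v' i * ∑ k, (A j k : ℂ) * v' k := by
          rw [Finset.mul_sum]
          exact Finset.sum_congr rfl fun k _ => by rw [hsymA k j]; ring
      _ = 0 := by rw [hA'v j, mul_zero]
  have hAP : A' * P = 0 := by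
    rw [hP, mul_smul_comm, hAX, smul_zero]
  have hPA : P * A' = 0 := by
    rw [hP, smul_mul_assoc, hXA, smul_zero]
  have hXX : Matrix.vecMulVec v' v' * Matrix.vecMulVec v' v'
      = (N:ℂ) • Matrix.vecMulVec v' v' := by
    ext i j
    rw [Matrix.mul_apply, Matrix.smul_apply, smul_eq_mul]
    simp only [Matrix.vecMulVec_apply]
    calc ∑ k, (v' i * v' k) * (v' k * v' j) = (∑ k, v' k * v' k) * (v' i * v' j) := by
          rw [Finset.sum_mul]
          exact Finset.sum_congr rfl fun k _ => by ring
      _ = (N:ℂ) * (v' i * v' j) := by rw [hsum']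
  have hPP : P * P = P := by
    rw [hP, smul_mul_assoc, mul_smul_comm, hXX, smul_smul, smul_smul]
    congr 1
    field_simp
  have hQsym : ∀ i j, P i j = P j i := by
    intro i j
    simp only [hP, Matrix.smul_apply, Matrix.vecMulVec_apply, smul_eq_mul]
    ring
  have hreal : ∀ i j, (starRingEnd ℂ) (P i j) = P i j := by
    intro i j
    simp only [hP, Matrix.smul_apply, Matrix.vecMulVec_apply, smul_eq_mul, hv',
      _root_.map_mul, map_inv₀, Complex.conj_ofReal]
  have hPzz : P z z = (p:ℂ) := by
    simp only [hP, Matrix.smul_apply, Matrix.vecMulVec_apply, smul_eq_mul, hv', hvz]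
    rw [hpdef]
    push_cast
    field_simp
  -- conjugate transpose facts
  have hAH : A'ᴴ = A' := by
    ext i j
    simp only [hA', Matrix.conjTranspose_apply, Matrix.map_apply, hc, RCLike.star_def,
      Complex.conj_ofReal, hsymA j i]
  -- the per-t bound
  have hbound : ∀ t : ℝ, 2 * p - 1 ≤
      ‖transition A t z z‖ := by
    intro t
    set M : Matrix (Fin n) (Fin n) ℂ := (Complex.I * t) • A' with hM
    have htrans : transition A t = NormedSpace.exp M := rfl
    set U : Matrix (Fin n) (Fin n) ℂ := NormedSpace.exp M with hU
    have hMH : Mᴴ = -M := by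
      rw [hM, Matrix.conjTranspose_smul, hAH, ← neg_smul]
      congr 1
      simp only [RCLike.star_def, _root_.map_mul, Complex.conj_I, Complex.conj_ofReal]
      ring
    have hUU : Uᴴ * U = 1 := by
      rw [hU, ← Matrix.exp_conjTranspose, hMH,
        ← Matrix.exp_add_of_commute (-M) M ((Commute.refl M).neg_left), neg_add_cancel,
        NormedSpace.exp_zero]
    have hMP : M * P = 0 := by rw [hM, smul_mul_assoc, hAP, smul_zero]
    have hPM : P * M = 0 := by rw [hM, mul_smul_comm, hPA, smul_zero]
    have hUP : U * P = P := exp_mul_right_zero M P hMP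
    have hPU : P * U = P := exp_mul_left_zero M P hPM
    rw [htrans]
    exact abstract_bound U P hUU hUP hPU hPP hQsym hreal z p hPzz hp0
  refine ⟨hpos, fun t => hbound t, ?_⟩
  haveI : Nonempty {t : ℝ // 0 < t} := ⟨⟨1, one_pos⟩⟩
  show 0 < ⨅ t : {t : ℝ // 0 < t}, ‖transition A t z z‖
  exact lt_of_lt_of_le hpos (le_ciInf fun t => hbound t.1)
end

section
/- Let A be an n×n real symmetric matrix with zero diagonal (the adjacency matrix of a weighted graph), and let u, v, x be three distinct indices such that u and v are pendent vertices attached to x: A_{u,x} = a ≠ 0 and A_{u,y} = 0 for all y ≠ x, and A_{v,x} = b ≠ 0 and A_{v,y} = 0 for all y ≠ x. If |a| ≠ |b|, then u or v is sedentary: inf_{t>0} |exp(itA)_{u,u}| > 0 or inf_{t>0} |exp(itA)_{v,v}| > 0. -/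
open Matrix
open scoped Kronecker

open NormedSpace in
lemma exp_mulVec_fixed {k : ℕ} (N : Matrix (Fin k) (Fin k) ℂ) (w : Fin k → ℂ)
    (h : N.mulVec w = 0) : (exp N).mulVec w = w := by
  letI : SeminormedRing (Matrix (Fin k) (Fin k) ℂ) := Matrix.linftyOpSemiNormedRing
  letI : NormedRing (Matrix (Fin k) (Fin k) ℂ) := Matrix.linftyOpNormedRing
  letI : NormedAlgebra ℂ (Matrix (Fin k) (Fin k) ℂ) := Matrix.linftyOpNormedAlgebra
  let L : Matrix (Fin k) (Fin k) ℂ →ₗ[ℂ] (Fin k → ℂ) :=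
    { toFun := fun M => M.mulVec w
      map_add' := fun P Q => Matrix.add_mulVec P Q w
      map_smul' := fun c P => Matrix.smul_mulVec c P w }
  have hL : Continuous L := L.continuous_of_finiteDimensional
  have hs : Summable (fun p : ℕ => ((p.factorial : ℂ))⁻¹ • N ^ p) := expSeries_summable' N
  have hterm : ∀ p : ℕ, L (((p.factorial : ℂ))⁻¹ • N ^ p) = if p = 0 then w else 0 := by
    intro p
    cases p with
    | zero => simp [L, Matrix.one_mulVec]
    | succ q =>
      have : (N ^ (q + 1)).mulVec w = 0 := by
        rw [pow_succ, ← Matrix.mulVec_mulVec, h, Matrix.mulVec_zero]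
      simp [L, Matrix.smul_mulVec, this]
  have hsum : HasSum (fun p : ℕ => L (((p.factorial : ℂ))⁻¹ • N ^ p)) (L (exp N)) := by
    rw [exp_eq_tsum (𝕂 := ℂ)]
    exact hs.hasSum.map L hL
  rw [funext hterm] at hsum
  have : HasSum (fun p : ℕ => if p = 0 then w else 0) w := by
    have := hasSum_ite_eq (0 : ℕ) w
    simpa using this
  exact hsum.unique this

lemma transition_unitary {n : ℕ} (A : Matrix (Fin n) (Fin n) ℝ) (hA : A.IsSymm) (t : ℝ) :
    transition A t * (transition A t)ᴴ = 1 := by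
  set M : Matrix (Fin n) (Fin n) ℂ := (Complex.I * t) • A.map (fun x : ℝ => (x : ℂ)) with hM
  have hmap : (A.map (fun x : ℝ => (x : ℂ)))ᴴ = A.map (fun x : ℝ => (x : ℂ)) := by
    ext i j
    simp [Matrix.conjTranspose_apply, hA.apply i j]
  have hMH : Mᴴ = -M := by
    rw [hM, Matrix.conjTranspose_smul, hmap]
    rw [show star (Complex.I * (t : ℂ)) = -(Complex.I * t) by
      simp [Complex.ext_iff]]
    rw [neg_smul]
  have : transition A t * (transition A t)ᴴ = NormedSpace.exp M * NormedSpace.exp (-M) := by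
    rw [transition, ← hM, ← Matrix.exp_conjTranspose, hMH]
  rw [this, ← Matrix.exp_add_of_commute M (-M) (Commute.neg_right (Commute.refl M)),
    add_neg_cancel, NormedSpace.exp_zero]

lemma key_bound {n : ℕ} (A : Matrix (Fin n) (Fin n) ℝ) (hA : A.IsSymm)
    (u v x : Fin n) (huv : u ≠ v) (a b : ℝ) (hb : b ≠ 0)
    (hAux : A u x = a) (hupend : ∀ y : Fin n, y ≠ x → A u y = 0)
    (hAvx : A v x = b) (hvpend : ∀ y : Fin n, y ≠ x → A v y = 0)
    (hab : |a| < |b|) (t : ℝ) :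
    (b ^ 2 - a ^ 2) / (a ^ 2 + b ^ 2) ≤ ‖transition A t u u‖ := by
  set M : Matrix (Fin n) (Fin n) ℂ := (Complex.I * t) • A.map (fun x : ℝ => (x : ℂ)) with hM
  set U : Matrix (Fin n) (Fin n) ℂ := transition A t with hU
  set w : Fin n → ℂ := fun y => if y = u then (b : ℂ) else if y = v then -(a : ℂ) else 0
    with hwdef
  have hmv : ∀ P : Matrix (Fin n) (Fin n) ℂ,
      P.mulVec w = fun i => (b : ℂ) * P i u - (a : ℂ) * P i v := by
    intro P
    funext i
    have hterm : ∀ y : Fin n, P i y * w y =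
        (if y = u then (b : ℂ) * P i u else 0) + (if y = v then -((a : ℂ) * P i v) else 0) := by
      intro y
      rcases eq_or_ne y u with h | h
      · subst h
        simp [hwdef, huv]
        ring
      · rcases eq_or_ne y v with h2 | h2
        · subst h2
          simp [hwdef, h]
          ring
        · simp [hwdef, h, h2]
    rw [Matrix.mulVec, dotProduct]
    rw [Finset.sum_congr rfl fun y _ => hterm y, Finset.sum_add_distrib]
    simp [Finset.sum_ite_eq']
    ring
  have h1 : (A.map (fun x : ℝ => (x : ℂ))).mulVec w = 0 := by
    rw [hmv]
    funext i
    by_cases hix : i = x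
    · subst hix
      simp only [Matrix.map_apply, Pi.zero_apply]
      rw [show A i u = A u i from hA.apply u i, show A i v = A v i from hA.apply v i,
        hAux, hAvx]
      push_cast
      ring
    · simp only [Matrix.map_apply, Pi.zero_apply]
      rw [show A i u = A u i from hA.apply u i, show A i v = A v i from hA.apply v i,
        hupend i hix, hvpend i hix]
      simp
  have hAw : M.mulVec w = 0 := by
    rw [hM, Matrix.smul_mulVec, h1, smul_zero]
  have hUM : U = NormedSpace.exp M := rfl
  have hfix' : U.mulVec w = w := by rw [hUM]; exact exp_mulVec_fixed M w hAw
  have he : (b : ℂ) * U u u - (a : ℂ) * U u v = (b : ℂ) := by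
    have h2 := congrFun ((hmv U).symm.trans hfix') u
    simpa [hwdef] using h2
  have h3 : (U * Uᴴ) u u = 1 := by rw [hU, transition_unitary A hA t, Matrix.one_apply_eq]
  have h4 : ∑ y, Complex.normSq (U u y) = 1 := by
    have h5 : ∑ y, ((Complex.normSq (U u y) : ℂ)) = 1 := by
      rw [← h3, Matrix.mul_apply]
      exact Finset.sum_congr rfl fun y _ => by
        rw [Matrix.conjTranspose_apply, ← Complex.mul_conj]
        rfl
    exact_mod_cast h5
  have hpair : Complex.normSq (U u u) + Complex.normSq (U u v) ≤ 1 := by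
    have h6 := Finset.sum_le_sum_of_subset_of_nonneg (Finset.subset_univ ({u, v} : Finset (Fin n)))
      (fun y _ _ => Complex.normSq_nonneg (U u y))
    rw [Finset.sum_pair huv, h4] at h6
    exact h6
  have heqc : (a : ℂ) * U u v = (b : ℂ) * (U u u - 1) := by linear_combination -he
  set s := ‖U u u‖ with hs
  set q := ‖U u v‖ with hq
  set r := ‖U u u - 1‖ with hr
  have heq : |a| * q = |b| * r := by
    rw [hq, hr, ← Real.norm_eq_abs a, ← Complex.norm_real a, ← Real.norm_eq_abs b, ← Complex.norm_real b, ← norm_mul, ← norm_mul, heqc]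
  have hs0 : 0 ≤ s := norm_nonneg _
  have hq0 : 0 ≤ q := norm_nonneg _
  have hr0 : 0 ≤ r := norm_nonneg _
  have hsq : s ^ 2 + q ^ 2 ≤ 1 := by
    rw [hs, hq, Complex.sq_norm, Complex.sq_norm]; exact hpair
  have htri : 1 - s ≤ r := by
    have h6 := norm_sub_norm_le (1 : ℂ) (U u u)
    rw [norm_sub_rev (1 : ℂ) (U u u)] at h6
    simpa [hs, hr] using h6
  have heq2 : a ^ 2 * q ^ 2 = b ^ 2 * r ^ 2 := by
    have h7 : (|a| * q) ^ 2 = (|b| * r) ^ 2 := by rw [heq]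
    rw [mul_pow, mul_pow, sq_abs, sq_abs] at h7
    exact h7
  clear_value s q r
  clear hmv h1 hAw hUM hfix' he h3 h4 hpair heqc hs hq hr hwdef hM hU
  have hab2 : a ^ 2 < b ^ 2 := by
    nlinarith [abs_nonneg a, sq_abs a, sq_abs b]
  have hposd : (0 : ℝ) < a ^ 2 + b ^ 2 := by positivity
  rw [div_le_iff₀ hposd]
  rcases le_or_gt 1 s with h1 | h1
  · nlinarith
  · have h1s : 0 < 1 - s := by linarith
    have h8 : b ^ 2 * (1 - s) ^ 2 ≤ a ^ 2 * (1 - s ^ 2) := by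
      have : (1 - s) ^ 2 ≤ r ^ 2 := by nlinarith
      nlinarith [sq_nonneg a, sq_nonneg b]
    have h8' : (b ^ 2 * (1 - s)) * (1 - s) ≤ (a ^ 2 * (1 + s)) * (1 - s) := by
      linear_combination h8
    have h9 : b ^ 2 * (1 - s) ≤ a ^ 2 * (1 + s) := le_of_mul_le_mul_right h8' h1s
    nlinarith [h9]

lemma sedentary_of_bound {n : ℕ} (A : Matrix (Fin n) (Fin n) ℝ) (u : Fin n) (c : ℝ)
    (hc : 0 < c) (h : ∀ t : ℝ, c ≤ ‖transition A t u u‖) : Sedentary A u := by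
  haveI : Nonempty {t : ℝ // 0 < t} := ⟨⟨1, one_pos⟩⟩
  exact lt_of_lt_of_le hc (le_ciInf fun t => h t.1)


/-- if `u` and `v` are pendent vertices, both attached to `x`, whose pendent
edge weights `a`, `b` satisfy `|a| ≠ |b|`, then `u` or `v` is sedentary. -/
theorem stmt11 {n : ℕ} (A : Matrix (Fin n) (Fin n) ℝ) (hA : A.IsSymm)
    (hdiag : ∀ i : Fin n, A i i = 0)
    (u v x : Fin n) (huv : u ≠ v) (hux : u ≠ x) (hvx : v ≠ x)
    (a b : ℝ) (ha : a ≠ 0) (hb : b ≠ 0)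
    (hAux : A u x = a) (hupend : ∀ y : Fin n, y ≠ x → A u y = 0)
    (hAvx : A v x = b) (hvpend : ∀ y : Fin n, y ≠ x → A v y = 0)
    (hab : |a| ≠ |b|) :
    Sedentary A u ∨ Sedentary A v := by
  rcases hab.lt_or_gt with h | h
  · left
    refine sedentary_of_bound A u ((b ^ 2 - a ^ 2) / (a ^ 2 + b ^ 2)) ?_
      (fun t => key_bound A hA u v x huv a b hb hAux hupend hAvx hvpend h t)
    have hab2 : a ^ 2 < b ^ 2 := by nlinarith [abs_nonneg a, sq_abs a, sq_abs b]
    have : (0:ℝ) < a ^ 2 + b ^ 2 := by positivity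
    exact div_pos (by linarith) this
  · right
    refine sedentary_of_bound A v ((a ^ 2 - b ^ 2) / (b ^ 2 + a ^ 2)) ?_
      (fun t => key_bound A hA v u x huv.symm b a ha hAvx hvpend hAux hupend h t)
    have hab2 : b ^ 2 < a ^ 2 := by nlinarith [abs_nonneg b, sq_abs a, sq_abs b]
    have : (0:ℝ) < b ^ 2 + a ^ 2 := by positivity
    exact div_pos (by linarith) this
end

section
/- Let A be an n×n real symmetric matrix with zero diagonal (the adjacency matrix of a weighted graph), and let u, v, w, x be four distinct indices such that u, v, w are pendent vertices all attached to x: for each z ∈ {u,v,w}, A_{z,x} ≠ 0 and A_{z,y} = 0 for all y ≠ x. Then at least two of the three vertices u, v, w are sedentary, i.e., at least two of the quantities inf_{t>0} |exp(itA)_{u,u}|, inf_{t>0} |exp(itA)_{v,v}|, inf_{t>0} |exp(itA)_{w,w}| are strictly positive. This holds for every assignment of nonzero edge weights. -/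
open Matrix
open scoped Kronecker

namespace Stmt12Aux

open NormedSpace

lemma exp_mul_eq_of_mul_eq_zero {n : ℕ} (M P : Matrix (Fin n) (Fin n) ℂ) (h : M * P = 0) :
    exp M * P = P := by
  letI : SeminormedRing (Matrix (Fin n) (Fin n) ℂ) := Matrix.linftyOpSemiNormedRing
  letI : NormedRing (Matrix (Fin n) (Fin n) ℂ) := Matrix.linftyOpNormedRing
  letI : NormedAlgebra ℂ (Matrix (Fin n) (Fin n) ℂ) := Matrix.linftyOpNormedAlgebra
  have hs := exp_series_hasSum_exp' (𝕂 := ℂ) M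
  have h2 : HasSum (fun k : ℕ => (((k.factorial : ℂ))⁻¹ • M ^ k) * P) (exp M * P) :=
    hs.mul_right P
  have h3 : (fun k : ℕ => (((k.factorial : ℂ))⁻¹ • M ^ k) * P)
      = fun k => if k = 0 then P else 0 := by
    funext k
    cases k with
    | zero => simp
    | succ k =>
      have : M ^ (k+1) * P = 0 := by
        rw [pow_succ, mul_assoc, h, mul_zero]
      simp [smul_mul_assoc, this]
  rw [h3] at h2
  have h4 : HasSum (fun k : ℕ => if k = 0 then P else (0 : Matrix (Fin n) (Fin n) ℂ)) P := by
    simpa using hasSum_ite_eq 0 P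
  exact (h4.unique h2).symm

lemma mul_exp_eq_of_mul_eq_zero {n : ℕ} (M P : Matrix (Fin n) (Fin n) ℂ) (h : P * M = 0) :
    P * exp M = P := by
  letI : SeminormedRing (Matrix (Fin n) (Fin n) ℂ) := Matrix.linftyOpSemiNormedRing
  letI : NormedRing (Matrix (Fin n) (Fin n) ℂ) := Matrix.linftyOpNormedRing
  letI : NormedAlgebra ℂ (Matrix (Fin n) (Fin n) ℂ) := Matrix.linftyOpNormedAlgebra
  have hs := exp_series_hasSum_exp' (𝕂 := ℂ) M
  have h2 : HasSum (fun k : ℕ => P * (((k.factorial : ℂ))⁻¹ • M ^ k)) (P * exp M) :=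
    hs.mul_left P
  have h3 : (fun k : ℕ => P * (((k.factorial : ℂ))⁻¹ • M ^ k))
      = fun k => if k = 0 then P else 0 := by
    funext k
    cases k with
    | zero => simp
    | succ k =>
      have : P * M ^ (k+1) = 0 := by
        rw [pow_succ', ← mul_assoc, h, zero_mul]
      simp [mul_smul_comm, this]
  rw [h3] at h2
  have h4 : HasSum (fun k : ℕ => if k = 0 then P else (0 : Matrix (Fin n) (Fin n) ℂ)) P := by
    simpa using hasSum_ite_eq 0 P
  exact (h4.unique h2).symm

/-- Core lemma: a pendant vertex `u` whose squared weight is less than the sum of the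
squared weights of two fellow pendant vertices is sedentary. -/
lemma core {n : ℕ} (A : Matrix (Fin n) (Fin n) ℝ) (hA : A.IsSymm)
    (u v w x : Fin n) (huv : u ≠ v) (huw : u ≠ w) (hvw : v ≠ w)
    (hu : A u x ≠ 0)
    (hupend : ∀ y : Fin n, y ≠ x → A u y = 0)
    (hvpend : ∀ y : Fin n, y ≠ x → A v y = 0)
    (hwpend : ∀ y : Fin n, y ≠ x → A w y = 0)
    (hlt : A u x ^ 2 < A v x ^ 2 + A w x ^ 2) : Sedentary A u := by
  classical
  set a : ℝ := A u x with ha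
  set b : ℝ := A v x with hb
  set c : ℝ := A w x with hc
  set s : ℝ := a ^ 2 + b ^ 2 + c ^ 2 with hs_def
  have hs : 0 < s := by positivity
  -- the vector of weights, supported on {u, v, w}
  set d : Fin n → ℝ := fun i => if i = u then a else if i = v then b else if i = w then c else 0
    with hd_def
  have hd0 : ∀ i, ¬(i = u ∨ i = v ∨ i = w) → d i = 0 := by
    intro i hi
    push_neg at hi
    simp [hd_def, hi.1, hi.2.1, hi.2.2]
  have hdu : d u = a := by simp [hd_def]
  have hdv : d v = b := by simp [hd_def, huv.symm]
  have hdw : d w = c := by simp [hd_def, huw.symm, hvw.symm]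
  -- the indicator of {u, v, w}
  set χ : Fin n → ℝ := fun i => if i = u ∨ i = v ∨ i = w then 1 else 0 with hχ_def
  have hχd : ∀ i, χ i * d i = d i := by
    intro i
    by_cases hi : i = u ∨ i = v ∨ i = w
    · simp [hχ_def, hi]
    · simp [hχ_def, hi, hd0 i hi]
  -- the indicator of {x}
  set ex : Fin n → ℝ := fun i => if i = x then 1 else 0 with hex_def
  -- column structure of A at u, v, w
  have hcol : ∀ i j, A i j * χ j = ex i * d j := by
    intro i j
    by_cases hj : j = u ∨ j = v ∨ j = w
    · have h1 : A j i = if i = x then d j else 0 := by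
        by_cases h : i = x
        · subst h
          rcases hj with rfl | rfl | rfl
          · rw [if_pos rfl, hdu]
          · rw [if_pos rfl, hdv]
          · rw [if_pos rfl, hdw]
        · rw [if_neg h]
          rcases hj with rfl | rfl | rfl
          · exact hupend i h
          · exact hvpend i h
          · exact hwpend i h
      have h2 : A i j = A j i := (hA.apply i j).symm
      rw [h2, h1, hχ_def, hex_def]
      simp only [hj, if_true]
      by_cases h : i = x <;> simp [h]
    · simp [hχ_def, hj, hd0 j hj]
  have hsumd2 : ∑ k, d k ^ 2 = s := by
    have hsub : ∑ k, d k ^ 2 = ∑ k ∈ ({u, v, w} : Finset (Fin n)), d k ^ 2 := by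
      refine (Finset.sum_subset (Finset.subset_univ _) fun k _ hk => ?_).symm
      have : ¬(k = u ∨ k = v ∨ k = w) := by simpa using hk
      rw [hd0 k this]; ring
    rw [hsub, Finset.sum_insert (by simp [huv, huw]),
      Finset.sum_insert (by simp [hvw]), Finset.sum_singleton, hdu, hdv, hdw, hs_def]
    ring
  have hsumAd : ∀ i, ∑ k, A i k * d k = s * ex i := by
    intro i
    have hsub : ∑ k, A i k * d k = ∑ k ∈ ({u, v, w} : Finset (Fin n)), A i k * d k := by
      refine (Finset.sum_subset (Finset.subset_univ _) fun k _ hk => ?_).symm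
      have : ¬(k = u ∨ k = v ∨ k = w) := by simpa using hk
      rw [hd0 k this, mul_zero]
    have hAi : ∀ j, j = u ∨ j = v ∨ j = w → A i j = ex i * d j := by
      intro j hj
      have := hcol i j
      rw [hχ_def] at this
      simpa [hj] using this
    rw [hsub, Finset.sum_insert (by simp [huv, huw]),
      Finset.sum_insert (by simp [hvw]), Finset.sum_singleton,
      hAi u (by tauto), hAi v (by tauto), hAi w (by tauto), hdu, hdv, hdw, hs_def]
    ring
  -- the projection matrix
  set Q : Matrix (Fin n) (Fin n) ℝ := Matrix.diagonal χ with hQ_def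
  set V : Matrix (Fin n) (Fin n) ℝ := Matrix.vecMulVec d d with hV_def
  set P₀ : Matrix (Fin n) (Fin n) ℝ := Q - s⁻¹ • V with hP₀_def
  have hχχ : (fun i => χ i * χ i) = χ := by
    funext i
    by_cases h : i = u ∨ i = v ∨ i = w <;> simp [hχ_def, h]
  have hQQ : Q * Q = Q := by
    rw [hQ_def, Matrix.diagonal_mul_diagonal, hχχ]
  have hQV : Q * V = V := by
    ext i j
    rw [hQ_def, hV_def, Matrix.diagonal_mul, Matrix.vecMulVec_apply, ← mul_assoc, hχd]
  have hVQ : V * Q = V := by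
    ext i j
    rw [hQ_def, hV_def, Matrix.mul_diagonal, Matrix.vecMulVec_apply, mul_assoc,
      mul_comm (d j), hχd]
  have hVV : V * V = s • V := by
    ext i j
    rw [hV_def, Matrix.mul_apply, Matrix.smul_apply, Matrix.vecMulVec_apply]
    have : ∀ k, Matrix.vecMulVec d d i k * Matrix.vecMulVec d d k j
        = d i * d j * d k ^ 2 := by
      intro k
      rw [Matrix.vecMulVec_apply, Matrix.vecMulVec_apply]; ring
    rw [Finset.sum_congr rfl fun k _ => this k, ← Finset.mul_sum, hsumd2, smul_eq_mul]
    ring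
  have hPP : P₀ * P₀ = P₀ := by
    have h1 : Q * (s⁻¹ • V) = s⁻¹ • V := by rw [mul_smul_comm, hQV]
    have h2 : (s⁻¹ • V) * Q = s⁻¹ • V := by rw [smul_mul_assoc, hVQ]
    have h3 : (s⁻¹ • V) * (s⁻¹ • V) = s⁻¹ • V := by
      rw [smul_mul_assoc, mul_smul_comm, hVV, smul_smul, smul_smul]
      congr 1
      field_simp
    rw [hP₀_def, sub_mul, mul_sub, mul_sub, hQQ, h1, h2, h3]
    abel
  have hAQ : A * Q = Matrix.vecMulVec ex d := by
    ext i j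
    rw [Matrix.mul_diagonal, Matrix.vecMulVec_apply, hcol]
  have hAV : A * V = s • Matrix.vecMulVec ex d := by
    ext i j
    rw [hV_def, Matrix.mul_apply, Matrix.smul_apply, Matrix.vecMulVec_apply]
    have : ∀ k, A i k * Matrix.vecMulVec d d k j = A i k * d k * d j := by
      intro k; rw [Matrix.vecMulVec_apply]; ring
    rw [Finset.sum_congr rfl fun k _ => this k, ← Finset.sum_mul, hsumAd, smul_eq_mul]
    ring
  have hAP : A * P₀ = 0 := by
    rw [hP₀_def, mul_sub, hAQ, mul_smul_comm, hAV, smul_smul, inv_mul_cancel₀ hs.ne',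
      one_smul, sub_self]
  have hQsymm : Qᵀ = Q := Matrix.diagonal_transpose χ
  have hVsymm : Vᵀ = V := by
    ext i j
    rw [Matrix.transpose_apply, hV_def, Matrix.vecMulVec_apply, Matrix.vecMulVec_apply, mul_comm]
  have hPsymm : P₀ᵀ = P₀ := by
    rw [hP₀_def, Matrix.transpose_sub, Matrix.transpose_smul, hQsymm, hVsymm]
  have hPA : P₀ * A = 0 := by
    have : (P₀ * A)ᵀ = 0 := by
      rw [Matrix.transpose_mul, hA, hPsymm, hAP]
    calc P₀ * A = ((P₀ * A)ᵀ)ᵀ := (Matrix.transpose_transpose _).symm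
      _ = 0 := by rw [this, Matrix.transpose_zero]
  have hPuu : P₀ u u = 1 - a ^ 2 / s := by
    rw [hP₀_def, Matrix.sub_apply, Matrix.smul_apply, hQ_def, Matrix.diagonal_apply_eq,
      hV_def, Matrix.vecMulVec_apply, hdu, hχ_def]
    simp [div_eq_inv_mul, sq, mul_comm]
  -- pass to ℂ
  set f : ℝ →+* ℂ := Complex.ofRealHom with hf_def
  set Pc : Matrix (Fin n) (Fin n) ℂ := P₀.map f with hPc_def
  set Ac : Matrix (Fin n) (Fin n) ℂ := A.map (fun x : ℝ => (x : ℂ)) with hAc_def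
  have hAc' : Ac = A.map f := rfl
  have hPcPc : Pc * Pc = Pc := by rw [hPc_def, ← Matrix.map_mul, hPP]
  have hAcPc : Ac * Pc = 0 := by
    rw [hAc', hPc_def, ← Matrix.map_mul, hAP, Matrix.map_zero _ (map_zero f)]
  have hPcAc : Pc * Ac = 0 := by
    rw [hAc', hPc_def, ← Matrix.map_mul, hPA, Matrix.map_zero _ (map_zero f)]
  have hAcH : Acᴴ = Ac := by
    ext i j
    rw [Matrix.conjTranspose_apply, hAc_def, Matrix.map_apply, Matrix.map_apply,
      Complex.star_def, Complex.conj_ofReal, hA.apply]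
  have hPc_entry : ∀ i j, Pc i j = ((P₀ i j : ℝ) : ℂ) := by
    intro i j; rw [hPc_def, Matrix.map_apply]; rfl
  have hP₀_symm : ∀ i j, P₀ i j = P₀ j i := by
    intro i j
    conv_lhs => rw [← hPsymm]
    rfl
  have hPc_symm : ∀ i j, Pc i j = Pc j i := by
    intro i j
    rw [hPc_entry, hPc_entry, hP₀_symm i j]
  -- the uniform bound
  have key : ∀ t : ℝ, 1 - 2 * (a ^ 2 / s) ≤ ‖transition A t u u‖ := by
    intro t
    set M : Matrix (Fin n) (Fin n) ℂ := (Complex.I * t) • Ac with hM_def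
    set U : Matrix (Fin n) (Fin n) ℂ := NormedSpace.exp M with hU_def
    have hTU : transition A t = U := rfl
    have hMPc : M * Pc = 0 := by rw [hM_def, smul_mul_assoc, hAcPc, smul_zero]
    have hPcM : Pc * M = 0 := by rw [hM_def, mul_smul_comm, hPcAc, smul_zero]
    have hUPc : U * Pc = Pc := exp_mul_eq_of_mul_eq_zero M Pc hMPc
    have hPcU : Pc * U = Pc := mul_exp_eq_of_mul_eq_zero M Pc hPcM
    have hMH : Mᴴ = -M := by
      rw [hM_def, Matrix.conjTranspose_smul, hAcH]
      have : star (Complex.I * (t : ℂ)) = -(Complex.I * t) := by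
        rw [star_mul', Complex.star_def, Complex.conj_I, Complex.conj_ofReal]
        ring
      rw [this, neg_smul]
    have hUnit : Uᴴ * U = 1 := by
      have hcomm : Commute (-M) M := (Commute.refl M).neg_left
      rw [hU_def, ← Matrix.exp_conjTranspose M, hMH,
        ← Matrix.exp_add_of_commute (-M) M hcomm, neg_add_cancel, NormedSpace.exp_zero]
    -- the single-entry decomposition
    have hdecomp : (1 - Pc) * U * (1 - Pc) = U - Pc := by
      have e1 : (1 - Pc) * U = U - Pc := by rw [sub_mul, one_mul, hPcU]
      rw [e1, mul_sub, mul_one, sub_mul, hUPc, hPcPc]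
      abel
    -- Cauchy-Schwarz setup
    set q : EuclideanSpace ℂ (Fin n) := WithLp.toLp 2 fun i => (1 - Pc) i u with hq_def
    set z : EuclideanSpace ℂ (Fin n) := WithLp.toLp 2 fun i => ((U *ᵥ (q : Fin n → ℂ)) i) with hz_def
    have hq_real : ∀ i, (starRingEnd ℂ) (q i) = q i := by
      intro i
      rw [hq_def]
      simp only [Matrix.sub_apply, Matrix.one_apply, hPc_entry]
      split <;> simp [Complex.conj_ofReal]
    have hq_symm : ∀ i, (1 - Pc) u i = q i := by
      intro i
      rw [hq_def]
      simp only [Matrix.sub_apply, Matrix.one_apply, hPc_symm u i]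
      by_cases h : u = i
      · subst h; simp
      · simp [h, Ne.symm h]
    have hq_at : ∀ j, (1 - Pc) j u = q j := fun j => rfl
    have hinner_qz : (inner ℂ q z : ℂ) = ((1 - Pc) * U * (1 - Pc)) u u := by
      have lhs_eq : (inner ℂ q z : ℂ) = ∑ i, ∑ j, q i * U i j * q j := by
        rw [PiLp.inner_apply]
        refine Finset.sum_congr rfl fun i _ => ?_
        rw [RCLike.inner_apply', hq_real i]
        show q i * (U *ᵥ (q : Fin n → ℂ)) i = _
        rw [Matrix.mulVec, dotProduct, Finset.mul_sum]
        exact Finset.sum_congr rfl fun j _ => by ring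
      have rhs_eq : ((1 - Pc) * U * (1 - Pc)) u u = ∑ j, ∑ i, q i * U i j * q j := by
        rw [Matrix.mul_apply]
        refine Finset.sum_congr rfl fun j _ => ?_
        rw [Matrix.mul_apply, Finset.sum_mul]
        refine Finset.sum_congr rfl fun i _ => ?_
        rw [hq_symm i, hq_at j]
      rw [lhs_eq, rhs_eq, Finset.sum_comm]
    -- inner q q
    have h1P : (1 - Pc) * (1 - Pc) = 1 - Pc := by
      rw [mul_sub, mul_one, sub_mul, one_mul, hPcPc]
      abel
    have hinner_qq : (inner ℂ q q : ℂ) = ((1 - Pc) * (1 - Pc)) u u := by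
      rw [PiLp.inner_apply, Matrix.mul_apply]
      refine Finset.sum_congr rfl fun i _ => ?_
      rw [RCLike.inner_apply', hq_real i, hq_symm i, hq_at i]
    have hPcuu : Pc u u = ((1 - a ^ 2 / s : ℝ) : ℂ) := by rw [hPc_entry, hPuu]
    have hquu : (inner ℂ q q : ℂ) = ((a ^ 2 / s : ℝ) : ℂ) := by
      rw [hinner_qq, h1P, Matrix.sub_apply, Matrix.one_apply_eq, hPcuu]
      push_cast
      ring
    have hnq : ‖q‖ ^ 2 = a ^ 2 / s := by
      have h := inner_self_eq_norm_sq_to_K (𝕜 := ℂ) q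
      rw [hquu] at h
      have h2 : ((‖q‖ ^ 2 : ℝ) : ℂ) = ((a ^ 2 / s : ℝ) : ℂ) := by
        rw [Complex.ofReal_pow]; exact h.symm
      exact Complex.ofReal_inj.mp h2
    -- norm preservation
    have hinner_zz : (inner ℂ z z : ℂ) = (inner ℂ q q : ℂ) := by
      have e1 : (inner ℂ z z : ℂ)
          = dotProduct (star (U *ᵥ (q : Fin n → ℂ))) (U *ᵥ (q : Fin n → ℂ)) := by
        rw [PiLp.inner_apply, dotProduct]
        exact Finset.sum_congr rfl fun i _ => by rw [RCLike.inner_apply']; rfl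
      have e2 : (inner ℂ q q : ℂ) = dotProduct (star (q : Fin n → ℂ)) (q : Fin n → ℂ) := by
        rw [PiLp.inner_apply, dotProduct]
        exact Finset.sum_congr rfl fun i _ => by rw [RCLike.inner_apply']; rfl
      rw [e1, e2, Matrix.star_mulVec, ← dotProduct_mulVec,
        Matrix.mulVec_mulVec, hUnit, Matrix.one_mulVec]
    have hnz : ‖z‖ = ‖q‖ := by
      have h1 := inner_self_eq_norm_sq_to_K (𝕜 := ℂ) z
      have h2 := inner_self_eq_norm_sq_to_K (𝕜 := ℂ) q
      rw [hinner_zz, h2] at h1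
      have h3 : ‖z‖ ^ 2 = ‖q‖ ^ 2 := by exact_mod_cast h1.symm
      exact (sq_eq_sq₀ (norm_nonneg z) (norm_nonneg q)).mp h3
    -- Cauchy-Schwarz
    have hCS : ‖(inner ℂ q z : ℂ)‖ ≤ a ^ 2 / s := by
      calc ‖(inner ℂ q z : ℂ)‖ ≤ ‖q‖ * ‖z‖ := norm_inner_le_norm q z
        _ = ‖q‖ ^ 2 := by rw [hnz]; ring
        _ = a ^ 2 / s := hnq
    have hsub_entry : (inner ℂ q z : ℂ) = U u u - Pc u u := by
      rw [hinner_qz, hdecomp, Matrix.sub_apply]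
    have habs_P : ‖Pc u u‖ = 1 - a ^ 2 / s := by
      have hle : a ^ 2 / s ≤ 1 := by
        rw [div_le_one hs]
        nlinarith [sq_nonneg b, sq_nonneg c]
      rw [hPcuu, Complex.norm_real, Real.norm_eq_abs, abs_of_nonneg (by linarith)]
    have tri : ‖Pc u u‖ - ‖U u u‖ ≤ ‖U u u - Pc u u‖ := by
      rw [← norm_sub_rev]
      exact norm_sub_norm_le _ _
    have hfin : ‖U u u - Pc u u‖ ≤ a ^ 2 / s := by
      rw [← hsub_entry]; exact hCS
    have hTUe : transition A t u u = U u u := by rw [hTU]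
    rw [hTUe]
    linarith [tri, hfin, habs_P.le, habs_P.ge]
  -- conclude
  have hpos : 0 < 1 - 2 * (a ^ 2 / s) := by
    have h2 : a ^ 2 / s < 1 / 2 := by
      rw [div_lt_iff₀ hs]
      nlinarith
    linarith
  have hne : Nonempty {t : ℝ // 0 < t} := ⟨⟨1, one_pos⟩⟩
  show 0 < ⨅ t : {t : ℝ // 0 < t}, ‖transition A t u u‖
  exact lt_of_lt_of_le hpos (le_ciInf fun t => key t.1)

end Stmt12Aux

/-- if `u`, `v`, `w` are three pendent vertices all attached to the same
vertex `x`, then for every assignment of nonzero edge weights at least two of `u`, `v`, `w`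
are sedentary. -/
theorem stmt12 {n : ℕ} (A : Matrix (Fin n) (Fin n) ℝ) (hA : A.IsSymm)
    (hdiag : ∀ i : Fin n, A i i = 0)
    (u v w x : Fin n) (huv : u ≠ v) (huw : u ≠ w) (hvw : v ≠ w)
    (hux : u ≠ x) (hvx : v ≠ x) (hwx : w ≠ x)
    (hu : A u x ≠ 0) (hupend : ∀ y : Fin n, y ≠ x → A u y = 0)
    (hv : A v x ≠ 0) (hvpend : ∀ y : Fin n, y ≠ x → A v y = 0)
    (hw : A w x ≠ 0) (hwpend : ∀ y : Fin n, y ≠ x → A w y = 0) :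
    (Sedentary A u ∧ Sedentary A v) ∨ (Sedentary A u ∧ Sedentary A w) ∨
      (Sedentary A v ∧ Sedentary A w) := by
  have ha2 : 0 < A u x ^ 2 := by positivity
  have hb2 : 0 < A v x ^ 2 := by positivity
  have hc2 : 0 < A w x ^ 2 := by positivity
  by_cases h1 : A u x ^ 2 < A v x ^ 2 + A w x ^ 2
  · by_cases h2 : A v x ^ 2 < A u x ^ 2 + A w x ^ 2
    · exact Or.inl ⟨Stmt12Aux.core A hA u v w x huv huw hvw hu hupend hvpend hwpend h1,
        Stmt12Aux.core A hA v u w x huv.symm hvw huw hv hvpend hupend hwpend h2⟩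
    · push_neg at h2
      have h3 : A w x ^ 2 < A u x ^ 2 + A v x ^ 2 := by nlinarith
      exact Or.inr (Or.inl
        ⟨Stmt12Aux.core A hA u v w x huv huw hvw hu hupend hvpend hwpend h1,
         Stmt12Aux.core A hA w u v x huw.symm hvw.symm huv hw hwpend hupend hvpend h3⟩)
  · push_neg at h1
    have h2 : A v x ^ 2 < A u x ^ 2 + A w x ^ 2 := by nlinarith
    have h3 : A w x ^ 2 < A u x ^ 2 + A v x ^ 2 := by nlinarith
    exact Or.inr (Or.inr
      ⟨Stmt12Aux.core A hA v u w x huv.symm hvw huw hv hvpend hupend hwpend h2,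
       Stmt12Aux.core A hA w u v x huw.symm hvw.symm huv hw hwpend hupend hvpend h3⟩)
end

section
/- Let A be an n×n real symmetric matrix, let E₀ be the orthogonal spectral projection of A for the eigenvalue 0 (E₀ is real symmetric, idempotent, and for every vector v, A·v = 0 ↔ E₀·v = v), and let M = K₂ ⊗ A be the Kronecker product of the 2×2 matrix K₂ = [[0,1],[1,0]] with A (the adjacency matrix of the bipartite double). Fix an index u. (1) If (E₀)_{u,u} > 1/2, then u is sedentary for A and both copies (0,u), (1,u) are sedentary for M. (2) If (E₀)_{u,u} = 1/2, then u is sedentary for A if and only if (0,u) is sedentary for M; here a vertex w is sedentary for a symmetric matrix B when inf_{t>0} |exp(itB)_{w,w}| > 0. -/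
open Matrix
open scoped Kronecker

open NormedSpace

theorem exp_intertwine {p q : Type*} [Fintype p] [DecidableEq p] [Fintype q] [DecidableEq q]
    (B : Matrix p p ℂ) (C : Matrix q q ℂ) (L : Matrix p q ℂ) (h : B * L = L * C) :
    exp B * L = L * exp C := by
  have hφc : Continuous (fun X : Matrix p p ℂ => X * L) :=
    continuous_id.matrix_mul continuous_const
  have hψc : Continuous (fun X : Matrix q q ℂ => L * X) :=
    continuous_const.matrix_mul continuous_id
  have hk : ∀ k : ℕ, B ^ k * L = L * C ^ k := by
    intro k
    induction k with
    | zero => simp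
    | succ k ih =>
      rw [pow_succ, pow_succ, Matrix.mul_assoc, h, ← Matrix.mul_assoc, ih, Matrix.mul_assoc]
  letI : SeminormedRing (Matrix p p ℂ) := Matrix.linftyOpSemiNormedRing
  letI : NormedRing (Matrix p p ℂ) := Matrix.linftyOpNormedRing
  letI : NormedAlgebra ℂ (Matrix p p ℂ) := Matrix.linftyOpNormedAlgebra
  letI : SeminormedRing (Matrix q q ℂ) := Matrix.linftyOpSemiNormedRing
  letI : NormedRing (Matrix q q ℂ) := Matrix.linftyOpNormedRing
  letI : NormedAlgebra ℂ (Matrix q q ℂ) := Matrix.linftyOpNormedAlgebra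
  have hB : HasSum (fun k : ℕ => (k.factorial : ℂ)⁻¹ • B ^ k) (exp B) :=
    NormedSpace.exp_series_hasSum_exp' B
  have hC : HasSum (fun k : ℕ => (k.factorial : ℂ)⁻¹ • C ^ k) (exp C) :=
    NormedSpace.exp_series_hasSum_exp' C
  have h1 : HasSum (fun k : ℕ => ((k.factorial : ℂ)⁻¹ • B ^ k) * L) (exp B * L) :=
    hB.map (AddMonoidHom.mk' (fun X : Matrix p p ℂ => X * L)
      (fun X Y => Matrix.add_mul X Y L)) hφc
  have h2 : HasSum (fun k : ℕ => L * ((k.factorial : ℂ)⁻¹ • C ^ k)) (L * exp C) :=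
    hC.map (AddMonoidHom.mk' (fun X : Matrix q q ℂ => L * X)
      (fun X Y => Matrix.mul_add L X Y)) hψc
  have heq : (fun k : ℕ => ((k.factorial : ℂ)⁻¹ • B ^ k) * L)
      = fun k : ℕ => L * ((k.factorial : ℂ)⁻¹ • C ^ k) := by
    funext k
    rw [Matrix.smul_mul, Matrix.mul_smul, hk]
  rw [heq] at h1
  exact h1.unique h2


lemma transition_conjTranspose {n : ℕ} (A : Matrix (Fin n) (Fin n) ℝ) (hA : A.IsSymm) (t : ℝ) :
    (transition A t)ᴴ = transition A (-t) := by
  rw [transition, transition, ← Matrix.exp_conjTranspose]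
  congr 1
  rw [Matrix.conjTranspose_smul]
  have h1 : (A.map (fun x : ℝ => (x : ℂ)))ᴴ = A.map (fun x : ℝ => (x : ℂ)) := by
    ext i j
    simp [Matrix.conjTranspose_apply, hA.apply]
  rw [h1]
  have h2 : star (Complex.I * (t : ℂ)) = Complex.I * ((-t : ℝ) : ℂ) := by
    simp [Complex.ext_iff]
  rw [h2]


lemma transition_neg_mul {n : ℕ} (A : Matrix (Fin n) (Fin n) ℝ) (t : ℝ) :
    transition A (-t) * transition A t = 1 := by
  rw [transition, transition, ← Matrix.exp_add_of_commute, ← add_smul]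
  · norm_num
  · exact ((Commute.refl _).smul_left _).smul_right _

lemma keyA {n : ℕ} (A : Matrix (Fin n) (Fin n) ℝ) (hA : A.IsSymm)
    (E0 : Matrix (Fin n) (Fin n) ℝ) (hE0 : IsSpectralProj A 0 E0) (u : Fin n) (t : ℝ) :
    ‖transition A t u u - (E0 u u : ℂ)‖ ≤ 1 - E0 u u := by
  obtain ⟨hsymm, hidem, hiff⟩ := hE0
  have hAE : A * E0 = 0 := by
    ext i j
    have hcol : E0.mulVec (fun k => E0 k j) = fun k => E0 k j := by
      funext k
      have := congrFun (congrFun hidem k) j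
      simpa [Matrix.mul_apply, Matrix.mulVec, dotProduct] using this
    have h2 := (hiff (fun k => E0 k j)).mpr hcol
    have h3 := congrFun h2 i
    simpa [Matrix.mulVec, dotProduct, Matrix.mul_apply] using h3
  have hEA : E0 * A = 0 := by
    have h : (A * E0)ᵀ = 0 := by rw [hAE]; simp
    rwa [Matrix.transpose_mul, hsymm.eq, hA.eq] at h
  set cmap : ℝ → ℂ := fun x : ℝ => (x : ℂ) with hcmap
  set A' : Matrix (Fin n) (Fin n) ℂ := A.map cmap with hA'
  set P : Matrix (Fin n) (Fin n) ℂ := E0.map cmap with hP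
  have hmapmul : ∀ (X Y : Matrix (Fin n) (Fin n) ℝ),
      (X * Y).map cmap = X.map cmap * Y.map cmap := by
    intro X Y
    ext i j
    simp only [Matrix.map_apply, Matrix.mul_apply, hcmap]
    push_cast
    rfl
  have hA'P : A' * P = 0 := by
    rw [hA', hP, ← hmapmul, hAE]
    ext i j; simp [Matrix.map_apply, hcmap]
  have hPA' : P * A' = 0 := by
    rw [hA', hP, ← hmapmul, hEA]
    ext i j; simp [Matrix.map_apply, hcmap]
  have hP2 : P * P = P := by rw [hP, ← hmapmul, hidem]
  set B : Matrix (Fin n) (Fin n) ℂ := (Complex.I * t) • A' with hB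
  set U : Matrix (Fin n) (Fin n) ℂ := transition A t with hU
  have hUdef : U = exp B := rfl
  have hUP : U * P = P := by
    have h0 : B * P = P * (0 : Matrix (Fin n) (Fin n) ℂ) := by
      rw [hB, Matrix.smul_mul, hA'P, smul_zero, Matrix.mul_zero]
    calc U * P = P * exp (0 : Matrix (Fin n) (Fin n) ℂ) := by
          rw [hUdef]; exact exp_intertwine _ _ _ h0
      _ = P := by rw [exp_zero, Matrix.mul_one]
  have hPU : P * U = P := by
    have h0 : (0 : Matrix (Fin n) (Fin n) ℂ) * P = P * B := by
      rw [hB, Matrix.mul_smul, hPA', smul_zero, Matrix.zero_mul]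
    calc P * U = exp (0 : Matrix (Fin n) (Fin n) ℂ) * P := by
          rw [hUdef]; exact (exp_intertwine _ _ _ h0).symm
      _ = P := by rw [exp_zero, Matrix.one_mul]
  set Q : Matrix (Fin n) (Fin n) ℂ := 1 - P with hQ
  have h1 : Q * U = U - P := by rw [hQ, Matrix.sub_mul, Matrix.one_mul, hPU]
  have h2 : (U - P) * P = 0 := by rw [Matrix.sub_mul, hUP, hP2, sub_self]
  have hQUQ : Q * U * Q = U - P := by
    rw [h1, hQ, Matrix.mul_sub, Matrix.mul_one, h2, sub_zero]
  have hentry : U u u - (E0 u u : ℂ) = (Q * U * Q) u u := by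
    rw [hQUQ, Matrix.sub_apply, hP, Matrix.map_apply]
  set vf : Fin n → ℂ := fun k => Q k u with hvf
  set wf : Fin n → ℂ := U.mulVec vf with hwf
  have hQsym : ∀ k l, Q k l = Q l k := by
    intro k l
    simp only [hQ, Matrix.sub_apply, Matrix.one_apply, hP, Matrix.map_apply]
    rw [hsymm.apply k l]
    by_cases h : k = l
    · subst h; rfl
    · rw [if_neg h, if_neg (fun hh => h hh.symm)]
  have hQreal : ∀ k l, (starRingEnd ℂ) (Q k l) = Q k l := by
    intro k l
    simp [hQ, Matrix.sub_apply, Matrix.one_apply, hP, Matrix.map_apply, hcmap, apply_ite]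
  set v : EuclideanSpace ℂ (Fin n) := (WithLp.equiv 2 _).symm vf with hv
  set w : EuclideanSpace ℂ (Fin n) := (WithLp.equiv 2 _).symm wf with hw
  have hrv : (Q * U * Q) u u = inner ℂ v w := by
    rw [Matrix.mul_assoc, Matrix.mul_apply, PiLp.inner_apply]
    apply Finset.sum_congr rfl
    intro k _
    simp only [RCLike.inner_apply, hv, hw, WithLp.equiv_symm_apply, PiLp.toLp_apply]
    have e1 : (starRingEnd ℂ) (vf k) = Q u k := by
      simp only [hvf]
      rw [hQreal, hQsym k u]
    have e2 : wf k = (U * Q) k u := by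
      simp only [hwf, hvf]
      simp [Matrix.mulVec, dotProduct, Matrix.mul_apply]
    rw [e1, e2, mul_comm]
  have hUnit : Uᴴ * U = 1 := by
    rw [hUdef, ← hUdef, hU, transition_conjTranspose A hA, transition_neg_mul]
  have hww : (inner ℂ w w : ℂ) = inner ℂ v v := by
    rw [PiLp.inner_apply, PiLp.inner_apply]
    simp only [hv, hw, WithLp.equiv_symm_apply, PiLp.toLp_apply, RCLike.inner_apply]
    have lhs : ∑ k, wf k * (starRingEnd ℂ) (wf k) = dotProduct (star wf) wf := by
      simp [dotProduct, Pi.star_apply, mul_comm]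
    have rhs : ∑ k, vf k * (starRingEnd ℂ) (vf k) = dotProduct (star vf) vf := by
      simp [dotProduct, Pi.star_apply, mul_comm]
    rw [lhs, rhs, hwf, Matrix.star_mulVec, dotProduct_mulVec, Matrix.vecMul_vecMul,
      hUnit, Matrix.vecMul_one]
  have hQ2 : Q * Q = Q := by
    rw [hQ, Matrix.sub_mul, Matrix.one_mul, Matrix.mul_sub, Matrix.mul_one, hP2]
    abel
  have hvv : (inner ℂ v v : ℂ) = ((1 : ℝ) - E0 u u : ℝ) := by
    have step : (inner ℂ v v : ℂ) = (Q * Q) u u := by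
      rw [PiLp.inner_apply, Matrix.mul_apply]
      apply Finset.sum_congr rfl
      intro k _
      simp only [RCLike.inner_apply, hv, WithLp.equiv_symm_apply, PiLp.toLp_apply, hvf]
      rw [hQreal, hQsym k u]
    rw [step, hQ2, hQ, Matrix.sub_apply, Matrix.one_apply_eq, hP, Matrix.map_apply]
    push_cast
    ring
  have hnv : ‖v‖ ^ 2 = 1 - E0 u u := by
    have h3 := inner_self_eq_norm_sq (𝕜 := ℂ) v
    rw [hvv] at h3
    rw [← h3]
    simp
  have hnw : ‖w‖ = ‖v‖ := by
    have h1' := inner_self_eq_norm_sq (𝕜 := ℂ) w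
    have h2' := inner_self_eq_norm_sq (𝕜 := ℂ) v
    rw [hww, h2'] at h1'
    nlinarith [norm_nonneg w, norm_nonneg v]
  calc ‖U u u - (E0 u u : ℂ)‖
      = ‖(inner ℂ v w : ℂ)‖ := by rw [hentry, hrv]
    _ ≤ ‖v‖ * ‖w‖ := norm_inner_le_norm v w
    _ = 1 - E0 u u := by rw [hnw, ← sq, hnv]

lemma keyM {n : ℕ} (A : Matrix (Fin n) (Fin n) ℝ) (hA : A.IsSymm) (a : Fin 2) (u : Fin n) (t : ℝ) :
    transition ((!![0, 1; 1, 0] : Matrix (Fin 2) (Fin 2) ℝ) ⊗ₖ A) t (a, u) (a, u)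
      = ((transition A t u u).re : ℂ) := by
  set cm : ℝ → ℂ := fun x => (x : ℂ) with hcm
  set B₁ : Matrix (Fin n) (Fin n) ℂ := (Complex.I * t) • A.map cm with hB₁
  set B₂ : Matrix (Fin 2 × Fin n) (Fin 2 × Fin n) ℂ :=
    (Complex.I * t) • (((!![0, 1; 1, 0] : Matrix (Fin 2) (Fin 2) ℝ) ⊗ₖ A).map cm) with hB₂
  set L : Matrix (Fin 2 × Fin n) (Fin n) ℂ :=
    Matrix.of (fun p j => if p.2 = j then 1 else 0) with hLdef
  set L' : Matrix (Fin 2 × Fin n) (Fin n) ℂ :=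
    Matrix.of (fun p j => (if p.1 = 0 then 1 else -1) * (if p.2 = j then 1 else 0)) with hL'def
  have h1 : B₂ * L = L * B₁ := by
    ext ⟨b, i⟩ j
    rw [Matrix.mul_apply, Matrix.mul_apply, Fintype.sum_prod_type]
    fin_cases b <;>
      simp [hB₂, hB₁, hLdef, hcm, Matrix.kroneckerMap_apply, Fin.sum_univ_two,
        Finset.mul_sum, mul_ite]
  have h2 : B₂ * L' = L' * (-B₁) := by
    ext ⟨b, i⟩ j
    rw [Matrix.mul_apply, Matrix.mul_apply, Fintype.sum_prod_type]
    fin_cases b <;>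
      simp [hB₂, hB₁, hL'def, hcm, Matrix.kroneckerMap_apply, Fin.sum_univ_two,
        Finset.mul_sum, mul_ite]
  have hL : exp B₂ * L = L * exp B₁ := exp_intertwine _ _ _ h1
  have hL' : exp B₂ * L' = L' * exp (-B₁) := exp_intertwine _ _ _ h2
  have hnegB : exp (-B₁) = transition A (-t) := by
    rw [transition]
    congr 1
    rw [hB₁]
    push_cast
    rw [← neg_smul]
    ring_nf
    rfl
  have e1 := congrFun (congrFun hL (a, u)) u
  have e2 := congrFun (congrFun hL' (a, u)) u
  rw [Matrix.mul_apply, Matrix.mul_apply, Fintype.sum_prod_type] at e1 e2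
  have hconj : transition A (-t) u u = (starRingEnd ℂ) (transition A t u u) := by
    rw [← transition_conjTranspose A hA t, Matrix.conjTranspose_apply]
    rfl
  set X := exp B₂
  have hXt : transition ((!![0, 1; 1, 0] : Matrix (Fin 2) (Fin 2) ℝ) ⊗ₖ A) t (a, u) (a, u)
      = X (a, u) (a, u) := rfl
  have hre : (transition A t u u) + (starRingEnd ℂ) (transition A t u u)
      = 2 * ((transition A t u u).re : ℂ) := by
    rw [Complex.add_conj]
    push_cast
    ring
  have hEB : exp B₁ = transition A t := rfl
  rw [hXt]
  rw [hnegB] at e2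
  fin_cases a
  · simp only [Fin.mk_zero, Fin.mk_one, Fin.isValue, id_eq] at e1 e2 ⊢
    simp only [hLdef, hL'def, Matrix.of_apply, mul_ite, mul_one, mul_zero, ite_mul, one_mul,
      neg_mul, zero_mul, Finset.sum_ite_eq', Finset.sum_ite_eq, Finset.mem_univ, if_true,
      Fin.sum_univ_two, hEB] at e1 e2
    simp only [show ((0 : Fin 2) = 0) = True from by simp,
      show ((1 : Fin 2) = 0) = False from by simp, if_true, if_false] at e1 e2
    rw [hconj] at e2
    linear_combination e1 / 2 + e2 / 2 + hre / 2
  · simp only [Fin.mk_zero, Fin.mk_one, Fin.isValue, id_eq] at e1 e2 ⊢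
    simp only [hLdef, hL'def, Matrix.of_apply, mul_ite, mul_one, mul_zero, ite_mul, one_mul,
      neg_mul, zero_mul, Finset.sum_ite_eq', Finset.sum_ite_eq, Finset.mem_univ, if_true,
      Fin.sum_univ_two, hEB] at e1 e2
    simp only [show ((0 : Fin 2) = 0) = True from by simp,
      show ((1 : Fin 2) = 0) = False from by simp, if_true, if_false] at e1 e2
    rw [hconj] at e2
    linear_combination e1 / 2 - e2 / 2 + hre / 2

instance : Nonempty {t : ℝ // 0 < t} := ⟨⟨1, one_pos⟩⟩

lemma sed_of_bound {m : Type*} [Fintype m] [DecidableEq m] (A : Matrix m m ℝ) (u : m)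
    {c : ℝ} (hc : 0 < c) (h : ∀ t : {t : ℝ // 0 < t}, c ≤ ‖transition A t u u‖) :
    Sedentary A u :=
  lt_of_lt_of_le hc (le_ciInf h)

lemma bound_of_sed {m : Type*} [Fintype m] [DecidableEq m] (A : Matrix m m ℝ) (u : m)
    (h : Sedentary A u) :
    ∃ c : ℝ, 0 < c ∧ ∀ t : {t : ℝ // 0 < t}, c ≤ ‖transition A t u u‖ := by
  refine ⟨_, h, fun t => ciInf_le ?_ t⟩
  refine ⟨0, ?_⟩
  rintro x ⟨s, rfl⟩
  exact norm_nonneg _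


/-- let `E₀` be the spectral projection of the real symmetric matrix `A` for
the eigenvalue `0`, and let `M = K₂ ⊗ A` be the adjacency matrix of the bipartite double.
(1) If `(E₀)_{u,u} > 1/2` then `u` is sedentary for `A` and both copies `(0,u)`, `(1,u)`
are sedentary for `M`. (2) If `(E₀)_{u,u} = 1/2` then `u` is sedentary for `A` iff `(0,u)`
is sedentary for `M`. -/
theorem stmt13 {n : ℕ} (A : Matrix (Fin n) (Fin n) ℝ) (hA : A.IsSymm)
    (E0 : Matrix (Fin n) (Fin n) ℝ) (hE0 : IsSpectralProj A 0 E0) (u : Fin n) :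
    (1 / 2 < E0 u u →
      Sedentary A u ∧
      Sedentary ((!![0, 1; 1, 0] : Matrix (Fin 2) (Fin 2) ℝ) ⊗ₖ A) (0, u) ∧
      Sedentary ((!![0, 1; 1, 0] : Matrix (Fin 2) (Fin 2) ℝ) ⊗ₖ A) (1, u)) ∧
    (E0 u u = 1 / 2 →
      (Sedentary A u ↔
        Sedentary ((!![0, 1; 1, 0] : Matrix (Fin 2) (Fin 2) ℝ) ⊗ₖ A) (0, u))) := by
  set e : ℝ := E0 u u with he
  have key : ∀ t : ℝ, ‖transition A t u u - (e : ℂ)‖ ≤ 1 - e :=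
    fun t => keyA A hA E0 hE0 u t
  -- real part bound: for every t, `re ≥ e - (1 - e)` and `abs ≥ 2e - 1`
  have habs : ∀ t : ℝ, 2 * e - 1 ≤ ‖transition A t u u‖ := by
    intro t
    set z := transition A t u u with hz
    have h4 := norm_add_le ((e : ℂ) - z) z
    have h5 : ‖(e : ℂ) - z‖ = ‖z - (e : ℂ)‖ := by
      rw [← norm_neg]; ring_nf
    have h6 : ‖(e : ℂ) - z + z‖ = ‖((e : ℝ) : ℂ)‖ := by ring_nf
    have h7 : ‖((e : ℝ) : ℂ)‖ = |e| := by rw [Complex.norm_real, Real.norm_eq_abs]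
    have h8 : ‖z - (e : ℂ)‖ ≤ 1 - e := key t
    have h9 : e ≤ |e| := le_abs_self e
    rw [h6, h7, h5] at h4
    linarith
  have hrebd : ∀ t : ℝ, 2 * e - 1 ≤ (transition A t u u).re := by
    intro t
    set z := transition A t u u with hz
    have h1 : -(‖z - (e : ℂ)‖) ≤ (z - (e : ℂ)).re :=
      (abs_le.mp (Complex.abs_re_le_norm (z - (e : ℂ)))).1
    have h3 : (z - (e : ℂ)).re = z.re - e := by simp
    have h8 := key t
    rw [h3] at h1
    linarith
  constructor
  · intro hgt
    have hc : (0 : ℝ) < 2 * e - 1 := by linarith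
    refine ⟨sed_of_bound A u hc (fun t => habs t), ?_, ?_⟩
    · refine sed_of_bound _ _ hc (fun t => ?_)
      rw [keyM A hA 0 u t, Complex.norm_real, Real.norm_eq_abs]
      exact (hrebd t).trans (le_abs_self _)
    · refine sed_of_bound _ _ hc (fun t => ?_)
      rw [keyM A hA 1 u t, Complex.norm_real, Real.norm_eq_abs]
      exact (hrebd t).trans (le_abs_self _)
  · intro heq
    constructor
    · intro hsed
      obtain ⟨c, hc, hbd⟩ := bound_of_sed A u hsed
      refine sed_of_bound _ _ (show (0:ℝ) < c ^ 2 by positivity) (fun t => ?_)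
      rw [keyM A hA 0 u t, Complex.norm_real, Real.norm_eq_abs]
      set z := transition A (t : ℝ) u u with hz
      have h8 : ‖z - (e : ℂ)‖ ≤ 1 - e := key (t : ℝ)
      have h9 : ‖z - (e : ℂ)‖ ^ 2 ≤ (1 - e) ^ 2 := by
        have hnn := norm_nonneg (z - (e : ℂ))
        nlinarith
      have h10 : ‖z - (e : ℂ)‖ ^ 2 = (z.re - e) ^ 2 + z.im ^ 2 := by
        rw [Complex.sq_norm, Complex.normSq_apply, Complex.sub_re, Complex.sub_im,
          Complex.ofReal_re, Complex.ofReal_im]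
        ring
      have h11 : c ≤ ‖z‖ := hbd t
      have h12 : ‖z‖ ^ 2 = z.re ^ 2 + z.im ^ 2 := by
        rw [Complex.sq_norm, Complex.normSq_apply]; ring
      have h13 : c ^ 2 ≤ ‖z‖ ^ 2 := by
        nlinarith [norm_nonneg z]
      have h14 : c ^ 2 ≤ z.re := by nlinarith
      exact h14.trans (le_abs_self _)
    · intro hsed
      obtain ⟨c, hc, hbd⟩ := bound_of_sed _ _ hsed
      refine sed_of_bound _ _ hc (fun t => ?_)
      have h1 := hbd t
      rw [keyM A hA 0 u (t : ℝ), Complex.norm_real, Real.norm_eq_abs] at h1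
      exact h1.trans ((Complex.abs_re_le_norm _))
end
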